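/- arXiv:2011.14811 — 5 statements merged into one kernel-verified Lean document; each statement's English description precedes it below -/
import Mathlib

section
/- Let n ≥ 1, let A ∈ ℂ^{n×n} be positive-imaginary with sectorial decomposition A = Tᴴ diag(e^{iφ₁},…,e^{iφₙ}) T where T is invertible and π > φ₁ ≥ ⋯ ≥ φₙ ≥ 0, let 0 ≤ r ≤ n, and set Ê = Tᴴ diag(e^{iφ₁/2},…,e^{iφ_r/2},1,…,1) T. Then Ê is sectorial with prank(Ê) ≤ r, Ê⁻¹AÊ⁻¹ = T⁻¹ diag(1,…,1,e^{iφ_{r+1}},…,e^{iφₙ}) T⁻ᴴ, and Ê⁻¹AÊ⁻¹ is positive-imaginary with canonical phases equal (as a multiset) to {0 repeated r times} ∪ {φ_{r+1},…,φₙ}. -/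
noncomputable section

open Matrix
open scoped Classical ComplexOrder

namespace LowPrank

variable {n : ℕ}

/-- A matrix is sectorial if its numerical range does not contain `0`
(`star x ⬝ᵥ x = 1` encodes `‖x‖₂ = 1`). -/
def IsSectorial (A : Matrix (Fin n) (Fin n) ℂ) : Prop :=
  ∀ x : Fin n → ℂ, star x ⬝ᵥ x = 1 → star x ⬝ᵥ A.mulVec x ≠ 0

/-- The diagonal unitary matrix `diag (e^{iφ₁}, …, e^{iφₙ})`. -/
def phaseDiag (φ : Fin n → ℝ) : Matrix (Fin n) (Fin n) ℂ :=
  Matrix.diagonal fun k => Complex.exp (Complex.I * (φ k : ℂ))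

/-- `A = Tᴴ diag (e^{iφ₁}, …, e^{iφₙ}) T` with `T` invertible. -/
def IsSectorialDecomp (A T : Matrix (Fin n) (Fin n) ℂ) (φ : Fin n → ℝ) : Prop :=
  IsUnit T ∧ A = Tᴴ * phaseDiag φ * T

/-- `φ` is the (sorted, normalized) vector of canonical phases of `A`:
nonincreasing, spread `< π`, midpoint of the range in `(-π, π]`, and realizing a
sectorial decomposition of `A`. -/
def IsCanonicalPhases (A : Matrix (Fin n) (Fin n) ℂ) (φ : Fin n → ℝ) : Prop :=
  Antitone φ ∧ (∀ i j, φ i - φ j < Real.pi) ∧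
    (-Real.pi < ((⨆ i, φ i) + ⨅ i, φ i) / 2) ∧ (((⨆ i, φ i) + ⨅ i, φ i) / 2 ≤ Real.pi) ∧
    ∃ T, IsSectorialDecomp A T φ

/-- The canonical phases `φ₁(A) ≥ ⋯ ≥ φₙ(A)` of a sectorial matrix
(`phases A k` is the `(k+1)`-st largest canonical phase). -/
noncomputable def phases (A : Matrix (Fin n) (Fin n) ℂ) : Fin n → ℝ :=
  if h : ∃ φ, IsCanonicalPhases A φ then h.choose else 0

/-- The phase-rank: the number of nonzero canonical phases. -/
noncomputable def prank (A : Matrix (Fin n) (Fin n) ℂ) : ℕ :=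
  {k : Fin n | phases A k ≠ 0}.ncard

/-- Positive-imaginary: sectorial with all canonical phases in `[0, π)`. -/
def PositiveImaginary (A : Matrix (Fin n) (Fin n) ℂ) : Prop :=
  IsSectorial A ∧ ∀ k, phases A k ∈ Set.Ico 0 Real.pi

/-- Symmetric gauge function. -/
structure IsSymmetricGauge (Φ : (Fin n → ℝ) → ℝ) : Prop where
  pos : ∀ x, x ≠ 0 → 0 < Φ x
  smul : ∀ (ρ : ℝ) (x), Φ (ρ • x) = |ρ| * Φ x
  subadd : ∀ x y, Φ (x + y) ≤ Φ x + Φ y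
  perm : ∀ (σ : Equiv.Perm (Fin n)) (x), Φ (x ∘ σ) = Φ x
  abs : ∀ x, Φ (fun k => |x k|) = Φ x

/-- The set `S_p(A, r)` of `r`-half-truncations of `A`. -/
def Sp (A : Matrix (Fin n) (Fin n) ℂ) (r : ℕ) : Set (Matrix (Fin n) (Fin n) ℂ) :=
  {E | ∃ T, IsSectorialDecomp A T (phases A) ∧
    E = Tᴴ * Matrix.diagonal (fun k : Fin n =>
      if (k : ℕ) < r then Complex.exp (Complex.I * ((phases A k / 2 : ℝ) : ℂ)) else 1) * T}


end LowPrank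

namespace LowPrankAux

open LowPrank

variable {n : ℕ}

lemma quadform (T : Matrix (Fin n) (Fin n) ℂ) (d : Fin n → ℂ) (x : Fin n → ℂ) :
    star x ⬝ᵥ (Tᴴ * Matrix.diagonal d * T).mulVec x
      = ∑ k, d k * (Complex.normSq (T.mulVec x k) : ℂ) := by
  rw [show Tᴴ * Matrix.diagonal d * T = Tᴴ * (Matrix.diagonal d * T) from mul_assoc _ _ _,
    ← mulVec_mulVec, dotProduct_mulVec, ← star_mulVec, ← mulVec_mulVec]
  simp only [dotProduct, Pi.star_apply, mulVec_diagonal]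
  refine Finset.sum_congr rfl fun k _ => ?_
  rw [Complex.normSq_eq_conj_mul_self]
  show star _ * _ = _
  rw [Complex.star_def]
  ring

lemma exp_term_re (θ : ℝ) (c : ℝ) : (Complex.exp (Complex.I * θ) * (c:ℂ)).re = Real.cos θ * c := by
  rw [mul_comm Complex.I, Complex.exp_mul_I]
  simp [Complex.add_re, Complex.cos_ofReal_re, Complex.mul_re]

lemma exp_term_im (θ : ℝ) (c : ℝ) : (Complex.exp (Complex.I * θ) * (c:ℂ)).im = Real.sin θ * c := by
  rw [mul_comm Complex.I, Complex.exp_mul_I]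
  simp [Complex.add_im, Complex.mul_im, Complex.sin_ofReal_re]

lemma mulVec_ne_zero (T : Matrix (Fin n) (Fin n) ℂ) (hT : IsUnit T) {x : Fin n → ℂ}
    (hx : x ≠ 0) : T.mulVec x ≠ 0 := by
  intro h
  apply hx
  have hdet : IsUnit T.det := (isUnit_iff_isUnit_det T).mp hT
  have := congrArg (T⁻¹.mulVec ·) h
  simpa [mulVec_mulVec, nonsing_inv_mul T hdet] using this

lemma unit_of_norm (x : Fin n → ℂ) (hx : star x ⬝ᵥ x = 1) : x ≠ 0 := by
  intro h; rw [h] at hx; simp at hx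

lemma isUnit_inv_matrix (T : Matrix (Fin n) (Fin n) ℂ) (hT : IsUnit T) : IsUnit T⁻¹ := by
  have hdet := (isUnit_iff_isUnit_det T).mp hT
  apply (isUnit_iff_isUnit_det _).mpr
  rw [det_nonsing_inv, Ring.inverse_eq_inv']
  exact (isUnit_iff_ne_zero).mpr (inv_ne_zero hdet.ne_zero)

/-- quadratic form with phase diagonal is nonzero when angles in `[0, π)` -/
lemma sectorial_of_decomp (T : Matrix (Fin n) (Fin n) ℂ) (hT : IsUnit T) (θ : Fin n → ℝ)
    (h0 : ∀ k, 0 ≤ θ k) (hπ : ∀ k, θ k < Real.pi) :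
    IsSectorial (Tᴴ * phaseDiag θ * T) := by
  intro x hx hz
  rw [phaseDiag, quadform] at hz
  set y := T.mulVec x with hy
  have hyne : y ≠ 0 := mulVec_ne_zero T hT (unit_of_norm x hx)
  have him : (∑ k, Complex.exp (Complex.I * (θ k:ℂ)) * (Complex.normSq (y k) : ℂ)).im
      = ∑ k, Real.sin (θ k) * Complex.normSq (y k) := by
    rw [Complex.im_sum]
    exact Finset.sum_congr rfl fun k _ => exp_term_im _ _
  have hre : (∑ k, Complex.exp (Complex.I * (θ k:ℂ)) * (Complex.normSq (y k) : ℂ)).re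
      = ∑ k, Real.cos (θ k) * Complex.normSq (y k) := by
    rw [Complex.re_sum]
    exact Finset.sum_congr rfl fun k _ => exp_term_re _ _
  rw [hz] at him hre
  simp only [Complex.zero_im, Complex.zero_re] at him hre
  have hterm : ∀ k ∈ Finset.univ, Real.sin (θ k) * Complex.normSq (y k) = 0 := by
    rw [← Finset.sum_eq_zero_iff_of_nonneg]
    · exact him.symm
    · intro k _
      exact mul_nonneg (Real.sin_nonneg_of_nonneg_of_le_pi (h0 k) (hπ k).le)
        (Complex.normSq_nonneg _)
  have hcos : ∀ k, Real.cos (θ k) * Complex.normSq (y k) = Complex.normSq (y k) := by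
    intro k
    rcases eq_or_ne (Complex.normSq (y k)) 0 with h | h
    · rw [h, mul_zero]
    · have hs : Real.sin (θ k) = 0 := by
        have := hterm k (Finset.mem_univ k)
        exact (mul_eq_zero.mp this).resolve_right h
      have : θ k = 0 := by
        by_contra h0'
        exact absurd hs (ne_of_gt (Real.sin_pos_of_pos_of_lt_pi
          (lt_of_le_of_ne (h0 k) (Ne.symm h0')) (hπ k)))
      rw [this, Real.cos_zero, one_mul]
  rw [Finset.sum_congr rfl (fun k _ => hcos k)] at hre
  obtain ⟨k, hk⟩ := Function.ne_iff.mp hyne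
  have : (0:ℝ) < ∑ k, Complex.normSq (y k) :=
    Finset.sum_pos' (fun k _ => Complex.normSq_nonneg _)
      ⟨k, Finset.mem_univ k, by simpa [Complex.normSq_pos] using hk⟩
  exact absurd hre.symm (ne_of_gt this)

lemma antitone_eq_of_multiset (f g : Fin n → ℝ) (hf : Antitone f) (hg : Antitone g)
    (h : Finset.univ.val.map f = Finset.univ.val.map g) : f = g := by
  have hval : (Finset.univ : Finset (Fin n)).val = ↑(List.finRange n) := rfl
  rw [hval] at h
  have h' : ((List.finRange n).map f : Multiset ℝ) = ((List.finRange n).map g : Multiset ℝ) := by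
    simpa using h
  have hperm := Multiset.coe_eq_coe.mp h'
  have hsf : ((List.finRange n).map f).SortedGE := by
    rw [← List.ofFn_eq_map]
    exact List.sortedGE_ofFn_iff.mpr hf
  have hsg : ((List.finRange n).map g).SortedGE := by
    rw [← List.ofFn_eq_map]
    exact List.sortedGE_ofFn_iff.mpr hg
  have := List.Perm.eq_of_sortedGE hsf hsg hperm
  rw [← List.ofFn_eq_map, ← List.ofFn_eq_map] at this
  exact funext (List.ofFn_inj.mp this ▸ fun k => congrFun rfl k)

lemma iSup_eq_of_antitone (hn : 0 < n) (f : Fin n → ℝ) (hf : Antitone f) :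
    (⨆ i, f i) = f ⟨0, hn⟩ := by
  haveI : Nonempty (Fin n) := ⟨⟨0, hn⟩⟩
  exact le_antisymm (ciSup_le fun k => hf (by simp [Fin.le_def]))
    (le_ciSup (Finite.bddAbove_range f) _)

lemma iInf_eq_of_antitone (hn : 0 < n) (f : Fin n → ℝ) (hf : Antitone f) :
    (⨅ i, f i) = f ⟨n-1, by omega⟩ := by
  haveI : Nonempty (Fin n) := ⟨⟨0, hn⟩⟩
  exact le_antisymm (ciInf_le (Finite.bddBelow_range f) _)
    (le_ciInf fun k => hf (by simp [Fin.le_def]; omega))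

lemma phaseDiag_conjTranspose (φ : Fin n → ℝ) :
    (phaseDiag φ)ᴴ = Matrix.diagonal fun k => Complex.exp (-(Complex.I * (φ k : ℂ))) := by
  ext i j
  rw [conjTranspose_apply, phaseDiag]
  by_cases h : i = j
  · subst h
    rw [diagonal_apply_eq, diagonal_apply_eq, Complex.star_def, ← Complex.exp_conj]
    congr 1
    rw [_root_.map_mul, Complex.conj_I, Complex.conj_ofReal, neg_mul]
  · rw [diagonal_apply_ne' _ h, diagonal_apply_ne _ h, star_zero]

lemma det_fact (T : Matrix (Fin n) (Fin n) ℂ) (φ : Fin n → ℝ) (z : ℂ) :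
    (z • (Tᴴ * phaseDiag φ * T)ᴴ - Tᴴ * phaseDiag φ * T).det
      = (star T.det * T.det * ∏ k, (Complex.exp (Complex.I * (φ k : ℂ)))⁻¹)
        * ∏ k, (z - Complex.exp (Complex.I * (φ k : ℂ)) ^ 2) := by
  have hA : (Tᴴ * phaseDiag φ * T)ᴴ = Tᴴ * (phaseDiag φ)ᴴ * T := by
    rw [conjTranspose_mul, conjTranspose_mul, conjTranspose_conjTranspose, mul_assoc]
  rw [hA, phaseDiag_conjTranspose, phaseDiag]
  have h1 : Matrix.diagonal (fun k : Fin n => z * Complex.exp (-(Complex.I * (φ k : ℂ)))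
        - Complex.exp (Complex.I * (φ k : ℂ)))
      = z • Matrix.diagonal (fun k => Complex.exp (-(Complex.I * (φ k : ℂ))))
        - Matrix.diagonal fun k => Complex.exp (Complex.I * (φ k : ℂ)) := by
    ext i j
    by_cases h : i = j <;> simp [Matrix.diagonal_apply, h]
  rw [show z • (Tᴴ * Matrix.diagonal (fun k => Complex.exp (-(Complex.I * (φ k : ℂ)))) * T)
        - Tᴴ * Matrix.diagonal (fun k => Complex.exp (Complex.I * (φ k : ℂ))) * T
      = Tᴴ * Matrix.diagonal (fun k => z * Complex.exp (-(Complex.I * (φ k : ℂ)))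
        - Complex.exp (Complex.I * (φ k : ℂ))) * T from by
    rw [h1, mul_sub, sub_mul, Matrix.mul_smul, Matrix.smul_mul]]
  rw [det_mul, det_mul, det_diagonal, det_conjTranspose]
  have hterm : ∀ k : Fin n, z * Complex.exp (-(Complex.I * (φ k : ℂ)))
        - Complex.exp (Complex.I * (φ k : ℂ))
      = (Complex.exp (Complex.I * (φ k : ℂ)))⁻¹
        * (z - Complex.exp (Complex.I * (φ k : ℂ)) ^ 2) := by
    intro k
    rw [Complex.exp_neg]
    have := Complex.exp_ne_zero (Complex.I * (φ k : ℂ))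
    field_simp
  rw [Finset.prod_congr rfl fun k _ => hterm k, Finset.prod_mul_distrib]
  ring

open Polynomial in
lemma roots_eq (T S : Matrix (Fin n) (Fin n) ℂ) (hT : IsUnit T) (hS : IsUnit S)
    (φ ψ : Fin n → ℝ) (h : Tᴴ * phaseDiag φ * T = Sᴴ * phaseDiag ψ * S) :
    Finset.univ.val.map (fun k => Complex.exp (Complex.I * (φ k : ℂ)) ^ 2)
      = Finset.univ.val.map (fun k => Complex.exp (Complex.I * (ψ k : ℂ)) ^ 2) := by
  set a : ℂ := star T.det * T.det * ∏ k, (Complex.exp (Complex.I * (φ k : ℂ)))⁻¹ with ha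
  set b : ℂ := star S.det * S.det * ∏ k, (Complex.exp (Complex.I * (ψ k : ℂ)))⁻¹ with hb
  have hTdet : T.det ≠ 0 := ((isUnit_iff_isUnit_det T).mp hT).ne_zero
  have hSdet : S.det ≠ 0 := ((isUnit_iff_isUnit_det S).mp hS).ne_zero
  have hane : a ≠ 0 := by
    refine mul_ne_zero (mul_ne_zero ?_ hTdet) ?_
    · simpa using hTdet
    · exact Finset.prod_ne_zero_iff.mpr fun k _ => inv_ne_zero (Complex.exp_ne_zero _)
  have hbne : b ≠ 0 := by
    refine mul_ne_zero (mul_ne_zero ?_ hSdet) ?_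
    · simpa using hSdet
    · exact Finset.prod_ne_zero_iff.mpr fun k _ => inv_ne_zero (Complex.exp_ne_zero _)
  set P : Polynomial ℂ :=
    ∏ k, (Polynomial.X - Polynomial.C (Complex.exp (Complex.I * (φ k : ℂ)) ^ 2)) with hP
  set Q : Polynomial ℂ :=
    ∏ k, (Polynomial.X - Polynomial.C (Complex.exp (Complex.I * (ψ k : ℂ)) ^ 2)) with hQ
  have hPmonic : P.Monic := monic_prod_of_monic _ _ fun k _ => monic_X_sub_C _
  have hQmonic : Q.Monic := monic_prod_of_monic _ _ fun k _ => monic_X_sub_C _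
  have heval : ∀ z : ℂ, (Polynomial.C a * P).eval z = (Polynomial.C b * Q).eval z := by
    intro z
    have h1 := det_fact T φ z
    have h2 := det_fact S ψ z
    rw [h] at h1
    rw [h1] at h2
    simp only [eval_mul, eval_C, eval_prod, eval_sub, eval_X, hP, hQ]
    rw [← ha, ← hb] at h2
    exact h2
  have hpq : Polynomial.C a * P = Polynomial.C b * Q := Polynomial.funext heval
  have hab : a = b := by
    have := congrArg Polynomial.leadingCoeff hpq
    rwa [leadingCoeff_mul, leadingCoeff_mul, leadingCoeff_C, hPmonic.leadingCoeff,
      hQmonic.leadingCoeff, mul_one, mul_one, leadingCoeff_C] at this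
  rw [hab] at hpq
  have hPQ : P = Q := mul_left_cancel₀ (Polynomial.C_ne_zero.mpr hbne) hpq
  have hroots : ∀ (f : Fin n → ℂ),
      (∏ k, (Polynomial.X - Polynomial.C (f k))).roots = Finset.univ.val.map f := by
    intro f
    rw [Finset.prod_eq_multiset_prod]
    rw [show Finset.univ.val.map (fun k => Polynomial.X - Polynomial.C (f k))
        = (Finset.univ.val.map f).map (fun c => Polynomial.X - Polynomial.C c) from by
      rw [Multiset.map_map]; rfl]
    exact Polynomial.roots_multiset_prod_X_sub_C _
  have := congrArg Polynomial.roots hPQ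
  rwa [hP, hQ, hroots, hroots] at this

lemma g_eq_self {m θ : ℝ} (h : |θ - m| < Real.pi/2) :
    m + (Complex.exp (Complex.I * (θ:ℂ)) ^ 2 * Complex.exp ((-(2*m) : ℝ) * Complex.I)).arg / 2
      = θ := by
  have hexp2 : Complex.exp (Complex.I * (θ:ℂ)) ^ 2 * Complex.exp ((-(2*m) : ℝ) * Complex.I)
      = Complex.exp (((2*θ - 2*m : ℝ)) * Complex.I) := by
    rw [sq, ← Complex.exp_add, ← Complex.exp_add]
    congr 1
    push_cast
    ring
  rw [hexp2, Complex.arg_exp_mul_I]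
  have hpi := Real.pi_pos
  have h' := abs_lt.mp h
  have hmem : (2*θ - 2*m) ∈ Set.Ioc (-Real.pi) (-Real.pi + 2*Real.pi) := by
    constructor <;> [linarith [h'.1]; linarith [h'.2]]
  rw [(toIocMod_eq_self _).mpr hmem]
  ring

lemma g_shift {m θ : ℝ} (h : 0 < Real.cos (θ - m)) :
    ∃ t : ℤ,
      m + (Complex.exp (Complex.I * (θ:ℂ)) ^ 2 * Complex.exp ((-(2*m) : ℝ) * Complex.I)).arg / 2
        = θ - (2*Real.pi) * t
      ∧ |m + (Complex.exp (Complex.I * (θ:ℂ)) ^ 2 *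
          Complex.exp ((-(2*m) : ℝ) * Complex.I)).arg / 2 - m| < Real.pi/2 := by
  have hpi := Real.pi_pos
  have hexp2 : Complex.exp (Complex.I * (θ:ℂ)) ^ 2 * Complex.exp ((-(2*m) : ℝ) * Complex.I)
      = Complex.exp (((2*θ - 2*m : ℝ)) * Complex.I) := by
    rw [sq, ← Complex.exp_add, ← Complex.exp_add]
    congr 1
    push_cast
    ring
  rw [hexp2, Complex.arg_exp_mul_I]
  set d : ℤ := toIocDiv (mul_pos two_pos Real.pi_pos) (-Real.pi) (2*θ - 2*m) with hd
  have hsub : toIocMod (mul_pos two_pos Real.pi_pos) (-Real.pi) (2*θ - 2*m)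
      = (2*θ - 2*m) - d • (2*Real.pi) := (self_sub_toIocDiv_zsmul _ _ _).symm
  have hmem := toIocMod_mem_Ioc (mul_pos two_pos Real.pi_pos) (-Real.pi) (2*θ - 2*m)
  rw [hsub] at hmem ⊢
  rw [zsmul_eq_mul] at hmem ⊢
  obtain ⟨hm1, hm2⟩ := hmem
  have hval : m + (2*θ - 2*m - d * (2*Real.pi)) / 2 = θ - Real.pi * d := by ring
  rw [hval]
  have hmem1 : -(Real.pi/2) < θ - Real.pi * d - m := by linarith
  have hmem2 : θ - Real.pi * d - m ≤ Real.pi/2 := by linarith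
  rcases Int.even_or_odd d with ⟨t, ht⟩ | ⟨t, ht⟩
  · have hcost : Real.cos (θ - Real.pi * d - m) = Real.cos (θ - m) := by
      rw [ht]
      push_cast
      rw [show θ - Real.pi * ((t:ℝ) + (t:ℝ)) - m = (θ - m) - (t:ℝ) * (2*Real.pi) by ring]
      exact Real.cos_sub_int_mul_two_pi _ _
    refine ⟨t, by rw [ht]; push_cast; ring, ?_⟩
    rw [abs_lt]
    refine ⟨by linarith, lt_of_le_of_ne hmem2 ?_⟩
    intro heq
    rw [← hcost, heq, Real.cos_pi_div_two] at h
    exact lt_irrefl 0 h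
  · exfalso
    have hcost : Real.cos (θ - Real.pi * d - m) = -Real.cos (θ - m) := by
      rw [ht]
      push_cast
      rw [show θ - Real.pi * (2*(t:ℝ) + 1) - m = ((θ - m) - Real.pi) - (t:ℝ) * (2*Real.pi) by ring]
      rw [Real.cos_sub_int_mul_two_pi, Real.cos_sub_pi]
    have hnn : 0 ≤ Real.cos (θ - Real.pi * d - m) :=
      Real.cos_nonneg_of_mem_Icc ⟨hmem1.le, hmem2⟩
    rw [hcost] at hnn
    linarith

lemma shifts_eq {a b a' b' m : ℝ} {t s : ℤ}
    (ha : a' = a - (2*Real.pi)*t) (hb : b' = b - (2*Real.pi)*s)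
    (h1 : a - b < Real.pi) (h2 : b - a < Real.pi)
    (ha' : |a' - m| < Real.pi/2) (hb' : |b' - m| < Real.pi/2) : t = s := by
  have hpi := Real.pi_pos
  have ha'' := abs_lt.mp ha'
  have hb'' := abs_lt.mp hb'
  have hkey : (2*Real.pi) * ((t:ℝ) - s) = (a - b) + (b' - a') := by
    rw [ha, hb]; ring
  have hub : (2*Real.pi) * ((t:ℝ) - s) < 2*Real.pi := by
    rw [hkey]; linarith [ha''.1, hb''.2]
  have hlb : -(2*Real.pi) < (2*Real.pi) * ((t:ℝ) - s) := by
    rw [hkey]; linarith [ha''.2, hb''.1]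
  have htr1 : ((t:ℝ) - s) < 1 := by nlinarith
  have htr2 : (-1:ℝ) < ((t:ℝ) - s) := by nlinarith
  have c1 : (t:ℤ) - s < 1 := by exact_mod_cast htr1
  have c2 : (-1:ℤ) < (t:ℤ) - s := by exact_mod_cast htr2
  omega

lemma canonical_unique (hn : 0 < n) (A : Matrix (Fin n) (Fin n) ℂ) (φ ψ : Fin n → ℝ)
    (hφ : IsCanonicalPhases A φ) (hψ : IsCanonicalPhases A ψ) : ψ = φ := by
  obtain ⟨hφa, hφs, hφm1, hφm2, T, hT, hTdec⟩ := hφ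
  obtain ⟨hψa, hψs, hψm1, hψm2, S, hS, hSdec⟩ := hψ
  have hpi := Real.pi_pos
  set i0 : Fin n := ⟨0, hn⟩ with hi0
  set il : Fin n := ⟨n-1, by omega⟩ with hil
  rw [iSup_eq_of_antitone hn φ hφa, iInf_eq_of_antitone hn φ hφa] at hφm1 hφm2
  rw [iSup_eq_of_antitone hn ψ hψa, iInf_eq_of_antitone hn ψ hψa] at hψm1 hψm2
  set mφ : ℝ := (φ i0 + φ il) / 2 with hmφ
  have hloc : ∀ k, |φ k - mφ| < Real.pi / 2 := by
    intro k
    have h1 : φ k ≤ φ i0 := hφa (Fin.le_def.mpr (Nat.zero_le _))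
    have h2 : φ il ≤ φ k := hφa (Fin.le_def.mpr (by have := k.isLt; show (k:ℕ) ≤ n-1; omega))
    have h3 : φ i0 - φ il < Real.pi := hφs i0 il
    rw [abs_lt]
    constructor
    · rw [hmφ]; linarith
    · rw [hmφ]; linarith
  have hcos : ∀ j, 0 < Real.cos (ψ j - mφ) := by
    intro j
    set x : Fin n → ℂ := S⁻¹.mulVec (Pi.single j 1) with hx
    have hSdet : IsUnit S.det := (isUnit_iff_isUnit_det S).mp hS
    have hSx : S.mulVec x = Pi.single j 1 := by
      rw [hx, mulVec_mulVec, mul_nonsing_inv S hSdet, one_mulVec]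
    have hxne : x ≠ 0 := by
      intro h0
      have : S.mulVec x = 0 := by rw [h0, mulVec_zero]
      rw [hSx] at this
      have := congrFun this j
      simp at this
    set y : Fin n → ℂ := T.mulVec x with hy
    have hyne : y ≠ 0 := mulVec_ne_zero T hT hxne
    have e1 : star x ⬝ᵥ A.mulVec x = Complex.exp (Complex.I * (ψ j : ℂ)) := by
      rw [hSdec, phaseDiag, quadform]
      rw [Finset.sum_eq_single j]
      · rw [hSx]; simp
      · intro k _ hk
        rw [hSx]
        simp [Pi.single_eq_of_ne hk]
      · intro h; exact absurd (Finset.mem_univ j) h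
    have e2 : star x ⬝ᵥ A.mulVec x
        = ∑ k, Complex.exp (Complex.I * (φ k : ℂ)) * (Complex.normSq (y k) : ℂ) := by
      rw [hTdec, phaseDiag, quadform]
    have key : Complex.exp (Complex.I * (ψ j : ℂ))
        = ∑ k, Complex.exp (Complex.I * (φ k : ℂ)) * (Complex.normSq (y k) : ℂ) :=
      e1.symm.trans e2
    have keym := congrArg (fun z => (Complex.exp (Complex.I * (-mφ : ℝ)) * z).re) key
    have lhs_eq : (Complex.exp (Complex.I * (-mφ : ℝ)) * Complex.exp (Complex.I * (ψ j : ℂ))).re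
        = Real.cos (ψ j - mφ) := by
      rw [← Complex.exp_add]
      have : Complex.I * ((-mφ : ℝ) : ℂ) + Complex.I * (ψ j : ℂ)
          = Complex.I * ((ψ j - mφ : ℝ) : ℂ) := by
        push_cast; ring
      rw [this]
      have := exp_term_re (ψ j - mφ) 1
      rw [Complex.ofReal_one, mul_one, mul_one] at this
      exact this
    have rhs_eq : (Complex.exp (Complex.I * (-mφ : ℝ)) *
          ∑ k, Complex.exp (Complex.I * (φ k : ℂ)) * (Complex.normSq (y k) : ℂ)).re
        = ∑ k, Real.cos (φ k - mφ) * Complex.normSq (y k) := by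
      rw [Finset.mul_sum, Complex.re_sum]
      refine Finset.sum_congr rfl fun k _ => ?_
      rw [← mul_assoc, ← Complex.exp_add]
      have : Complex.I * ((-mφ : ℝ) : ℂ) + Complex.I * (φ k : ℂ)
          = Complex.I * ((φ k - mφ : ℝ) : ℂ) := by
        push_cast; ring
      rw [this]
      exact exp_term_re _ _
    rw [lhs_eq, rhs_eq] at keym
    rw [keym]
    obtain ⟨k0, hk0⟩ := Function.ne_iff.mp hyne
    refine Finset.sum_pos' (fun k _ => ?_) ⟨k0, Finset.mem_univ k0, ?_⟩
    · have := abs_lt.mp (hloc k)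
      exact mul_nonneg (Real.cos_pos_of_mem_Ioo ⟨this.1, this.2⟩).le (Complex.normSq_nonneg _)
    · have := abs_lt.mp (hloc k0)
      exact mul_pos (Real.cos_pos_of_mem_Ioo ⟨this.1, this.2⟩)
        (by rwa [Complex.normSq_pos])
  have hmultsq := roots_eq T S hT hS φ ψ (hTdec.symm.trans hSdec)
  have hgψ : ∀ j, ∃ t : ℤ,
      mφ + (Complex.exp (Complex.I * (ψ j:ℂ)) ^ 2
          * Complex.exp ((-(2*mφ) : ℝ) * Complex.I)).arg / 2
        = ψ j - (2*Real.pi) * t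
      ∧ |mφ + (Complex.exp (Complex.I * (ψ j:ℂ)) ^ 2 *
          Complex.exp ((-(2*mφ) : ℝ) * Complex.I)).arg / 2 - mφ| < Real.pi/2 :=
    fun j => g_shift (hcos j)
  set ψ' : Fin n → ℝ := fun j =>
    mφ + (Complex.exp (Complex.I * (ψ j:ℂ)) ^ 2
      * Complex.exp ((-(2*mφ) : ℝ) * Complex.I)).arg / 2
    with hψ'
  have hmult : Finset.univ.val.map ψ' = Finset.univ.val.map φ := by
    have h1 : Finset.univ.val.map ψ' = (Finset.univ.val.map
        (fun k => Complex.exp (Complex.I * (ψ k : ℂ)) ^ 2)).map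
          (fun z => mφ + (z * Complex.exp ((-(2*mφ) : ℝ) * Complex.I)).arg / 2) := by
      rw [Multiset.map_map]; rfl
    have h2 : Finset.univ.val.map φ = (Finset.univ.val.map
        (fun k => Complex.exp (Complex.I * (φ k : ℂ)) ^ 2)).map
          (fun z => mφ + (z * Complex.exp ((-(2*mφ) : ℝ) * Complex.I)).arg / 2) := by
      rw [Multiset.map_map]
      exact Multiset.map_congr rfl fun k _ => (g_eq_self (hloc k)).symm
    rw [h1, h2, hmultsq]
  obtain ⟨t0, ht0, hb0⟩ := hgψ i0
  have hshift : ∀ j, ψ' j = ψ j - (2*Real.pi) * t0 := by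
    intro j
    obtain ⟨t, ht, hb⟩ := hgψ j
    have htint : t = t0 := shifts_eq ht ht0 (hψs j i0) (hψs i0 j) hb hb0
    rw [hψ']
    simp only []
    rw [← htint]
    exact ht
  have hψ'a : Antitone ψ' := by
    intro j l hjl
    rw [hshift j, hshift l]
    have := hψa hjl
    linarith
  have heq : ψ' = φ := antitone_eq_of_multiset ψ' φ hψ'a hφa hmult
  have hv0 : ψ i0 = φ i0 + (2*Real.pi) * t0 := by
    have h := hshift i0
    rw [congrFun heq i0] at h
    linarith
  have hvl : ψ il = φ il + (2*Real.pi) * t0 := by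
    have h := hshift il
    rw [congrFun heq il] at h
    linarith
  have ht00 : (t0 : ℝ) = 0 := by
    rw [hv0, hvl] at hψm1 hψm2
    have hub : (2*Real.pi) * (t0:ℝ) < 2*Real.pi := by
      rw [hmφ] at hφm1
      linarith
    have hlb : -(2*Real.pi) < (2*Real.pi) * (t0:ℝ) := by
      rw [hmφ] at hφm2
      linarith
    have htr1 : (t0:ℝ) < 1 := by nlinarith
    have htr2 : (-1:ℝ) < (t0:ℝ) := by nlinarith
    have c1 : t0 < 1 := by exact_mod_cast htr1
    have c2 : (-1:ℤ) < t0 := by exact_mod_cast htr2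
    have : t0 = 0 := by omega
    rw [this]; norm_num
  funext j
  have h := hshift j
  rw [congrFun heq j, ht00] at h
  linarith

lemma phases_eq (hn : 0 < n) {A : Matrix (Fin n) (Fin n) ℂ} {φ : Fin n → ℝ}
    (h : IsCanonicalPhases A φ) : phases A = φ := by
  have hex : ∃ ψ, IsCanonicalPhases A ψ := ⟨φ, h⟩
  rw [phases, dif_pos hex]
  exact canonical_unique hn A φ hex.choose h hex.choose_spec

lemma diag_sandwich_inv (T : Matrix (Fin n) (Fin n) ℂ) (hT : IsUnit T) (d : Fin n → ℂ)
    (hd : ∀ k, d k ≠ 0) :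
    (Tᴴ * Matrix.diagonal d * T)⁻¹ = T⁻¹ * Matrix.diagonal (fun k => (d k)⁻¹) * (T⁻¹)ᴴ := by
  apply inv_eq_right_inv
  have hdetT : IsUnit T.det := (isUnit_iff_isUnit_det T).mp hT
  have h1 : T * (T⁻¹ * Matrix.diagonal (fun k => (d k)⁻¹) * (T⁻¹)ᴴ)
      = Matrix.diagonal (fun k => (d k)⁻¹) * (T⁻¹)ᴴ := by
    rw [← mul_assoc, ← mul_assoc, mul_nonsing_inv T hdetT, one_mul]
  calc Tᴴ * Matrix.diagonal d * T * (T⁻¹ * Matrix.diagonal (fun k => (d k)⁻¹) * (T⁻¹)ᴴ)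
      = Tᴴ * Matrix.diagonal d * (Matrix.diagonal (fun k => (d k)⁻¹) * (T⁻¹)ᴴ) := by
        rw [mul_assoc (Tᴴ * Matrix.diagonal d), h1]
    _ = Tᴴ * (T⁻¹)ᴴ := by
        rw [mul_assoc Tᴴ, ← mul_assoc (Matrix.diagonal d), diagonal_mul_diagonal]
        have : (fun k => d k * (d k)⁻¹) = fun _ : Fin n => (1:ℂ) := by
          funext k; exact mul_inv_cancel₀ (hd k)
        rw [this, diagonal_one, one_mul]
    _ = 1 := by
        rw [conjTranspose_nonsing_inv]
        exact mul_nonsing_inv Tᴴ ((isUnit_iff_isUnit_det Tᴴ).mp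
          ((Matrix.isUnit_conjTranspose T).mpr hT))

lemma sandwich_eq (T : Matrix (Fin n) (Fin n) ℂ) (hT : IsUnit T) (d e : Fin n → ℂ)
    (hd : ∀ k, d k ≠ 0) :
    (Tᴴ * Matrix.diagonal d * T)⁻¹ * (Tᴴ * Matrix.diagonal e * T)
        * (Tᴴ * Matrix.diagonal d * T)⁻¹
      = T⁻¹ * Matrix.diagonal (fun k => (d k)⁻¹ * e k * (d k)⁻¹) * (T⁻¹)ᴴ := by
  have hdetT : IsUnit T.det := (isUnit_iff_isUnit_det T).mp hT
  rw [diag_sandwich_inv T hT d hd]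
  have hTT : (T⁻¹)ᴴ * Tᴴ = 1 := by
    rw [← conjTranspose_mul, mul_nonsing_inv T hdetT, conjTranspose_one]
  have hTT2 : T * T⁻¹ = 1 := mul_nonsing_inv T hdetT
  calc T⁻¹ * Matrix.diagonal (fun k => (d k)⁻¹) * (T⁻¹)ᴴ * (Tᴴ * Matrix.diagonal e * T) *
        (T⁻¹ * Matrix.diagonal (fun k => (d k)⁻¹) * (T⁻¹)ᴴ)
      = T⁻¹ * (Matrix.diagonal (fun k => (d k)⁻¹) * (((T⁻¹)ᴴ * Tᴴ) * (Matrix.diagonal e *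
          ((T * T⁻¹) * (Matrix.diagonal (fun k => (d k)⁻¹) * (T⁻¹)ᴴ))))) := by
        simp only [mul_assoc]
    _ = T⁻¹ * Matrix.diagonal (fun k => (d k)⁻¹ * e k * (d k)⁻¹) * (T⁻¹)ᴴ := by
        rw [hTT, hTT2, one_mul, one_mul, ← mul_assoc (Matrix.diagonal e), diagonal_mul_diagonal,
          ← mul_assoc (Matrix.diagonal _), diagonal_mul_diagonal]
        simp only [mul_assoc]

lemma perm_decomp (S : Matrix (Fin n) (Fin n) ℂ) (hS : IsUnit S) (d : Fin n → ℂ)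
    (σ : Equiv.Perm (Fin n)) :
    ∃ V : Matrix (Fin n) (Fin n) ℂ, IsUnit V ∧
      Vᴴ * Matrix.diagonal (d ∘ σ) * V = Sᴴ * Matrix.diagonal d * S := by
  have hSdet := (isUnit_iff_isUnit_det S).mp hS
  refine ⟨S.submatrix σ id, ?_, ?_⟩
  · have hprod : S.submatrix σ id * S⁻¹.submatrix id σ = 1 := by
      ext i j
      rw [mul_apply]
      have : ∑ k, S.submatrix σ id i k * S⁻¹.submatrix id σ k j
          = ∑ k, S (σ i) k * S⁻¹ k (σ j) := rfl
      rw [this, ← mul_apply, mul_nonsing_inv S hSdet]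
      simp [one_apply, EmbeddingLike.apply_eq_iff_eq]
    apply (isUnit_iff_isUnit_det _).mpr
    have := congrArg Matrix.det hprod
    rw [det_mul, det_one] at this
    exact IsUnit.of_mul_eq_one _ this
  · ext i j
    rw [mul_assoc, mul_apply, mul_assoc, mul_apply]
    rw [show (∑ k, (S.submatrix σ id)ᴴ i k * (Matrix.diagonal (d ∘ σ) * S.submatrix σ id) k j)
        = ∑ k, star (S (σ k) i) * (d (σ k) * S (σ k) j) from
      Finset.sum_congr rfl fun k _ => by
        rw [conjTranspose_apply, diagonal_mul]; rfl]
    rw [show (∑ k, Sᴴ i k * (Matrix.diagonal d * S) k j)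
        = ∑ k, star (S k i) * (d k * S k j) from
      Finset.sum_congr rfl fun k _ => by rw [conjTranspose_apply, diagonal_mul]]
    exact Equiv.sum_comp σ (fun m => star (S m i) * (d m * S m j))

end LowPrankAux

namespace LowPrank
open LowPrankAux

/-- properties of the `r`-half-truncation `Ê`. -/
theorem truncation_properties
    (hn : 1 ≤ n) (A T : Matrix (Fin n) (Fin n) ℂ) (φ : Fin n → ℝ)
    (hA : PositiveImaginary A) (hT : IsUnit T)
    (hφsort : Antitone φ) (hφ0 : ∀ k, 0 ≤ φ k) (hφπ : ∀ k, φ k < Real.pi)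
    (hdec : A = Tᴴ * phaseDiag φ * T)
    (r : ℕ) (hr : r ≤ n)
    (E : Matrix (Fin n) (Fin n) ℂ)
    (hE : E = Tᴴ * Matrix.diagonal (fun k : Fin n =>
      if (k : ℕ) < r then Complex.exp (Complex.I * ((φ k / 2 : ℝ) : ℂ)) else 1) * T) :
    IsSectorial E ∧ prank E ≤ r ∧
    E⁻¹ * A * E⁻¹ = T⁻¹ * Matrix.diagonal (fun k : Fin n =>
      if (k : ℕ) < r then 1 else Complex.exp (Complex.I * (φ k : ℂ))) * (T⁻¹)ᴴ ∧
    PositiveImaginary (E⁻¹ * A * E⁻¹) ∧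
    Finset.univ.val.map (phases (E⁻¹ * A * E⁻¹)) =
      Finset.univ.val.map (fun k : Fin n => if (k : ℕ) < r then 0 else φ k) := by
  have hn' : 0 < n := hn
  have hpi := Real.pi_pos
  haveI : NeZero n := ⟨by omega⟩
  set θ : Fin n → ℝ := fun k => if (k:ℕ) < r then 0 else φ k with hθdef
  set χ : Fin n → ℝ := fun k => if (k:ℕ) < r then φ k / 2 else 0 with hχdef
  set δ : Fin n → ℝ := fun k =>
    if h : (k:ℕ) < n - r then φ ⟨(k:ℕ) + r, by omega⟩ else 0 with hδdef
  -- properties of χ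
  have hχval : ∀ k, 0 ≤ χ k ∧ χ k < Real.pi/2 := by
    intro k
    rw [hχdef]
    dsimp only
    split_ifs with h
    · exact ⟨by linarith [hφ0 k], by linarith [hφπ k]⟩
    · exact ⟨le_refl 0, by linarith⟩
  have hχa : Antitone χ := by
    intro k l hkl
    have hkl' : (k:ℕ) ≤ (l:ℕ) := hkl
    rw [hχdef]
    dsimp only
    by_cases hk : (k:ℕ) < r <;> by_cases hl : (l:ℕ) < r
    · rw [if_pos hk, if_pos hl]
      have := hφsort hkl
      linarith
    · rw [if_pos hk, if_neg hl]
      linarith [hφ0 k]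
    · exact absurd (lt_of_le_of_lt hkl' hl) hk
    · rw [if_neg hk, if_neg hl]
  have hχfun : (fun k : Fin n => Complex.exp (Complex.I * ((χ k : ℝ) : ℂ)))
      = fun k : Fin n => if (k:ℕ) < r then Complex.exp (Complex.I * ((φ k / 2 : ℝ) : ℂ)) else 1 := by
    funext k
    rw [hχdef]
    dsimp only
    split_ifs with h
    · rfl
    · rw [Complex.ofReal_zero, mul_zero, Complex.exp_zero]
  have hEdec : E = Tᴴ * phaseDiag χ * T := by rw [hE, phaseDiag, hχfun]
  have hEcan : IsCanonicalPhases E χ := by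
    refine ⟨hχa, ?_, ?_, ?_, T, hT, hEdec⟩
    · intro i j
      linarith [(hχval i).2, (hχval j).1]
    · rw [iSup_eq_of_antitone hn' χ hχa, iInf_eq_of_antitone hn' χ hχa]
      linarith [(hχval ⟨0,hn'⟩).1, (hχval ⟨n-1, by omega⟩).1]
    · rw [iSup_eq_of_antitone hn' χ hχa, iInf_eq_of_antitone hn' χ hχa]
      linarith [(hχval ⟨0,hn'⟩).2, (hχval ⟨n-1, by omega⟩).2]
  have hsecE : IsSectorial E := by
    rw [hEdec]
    exact sectorial_of_decomp T hT χ (fun k => (hχval k).1)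
      (fun k => by linarith [(hχval k).2])
  have hphE : phases E = χ := phases_eq hn' hEcan
  have hprankE : prank E ≤ r := by
    unfold prank
    rw [hphE]
    have hsub : {k : Fin n | χ k ≠ 0}
        ⊆ ↑(Finset.filter (fun k : Fin n => (k:ℕ) < r) Finset.univ) := by
      intro k hk
      simp only [Set.mem_setOf_eq] at hk
      simp only [Finset.coe_filter, Set.mem_setOf_eq, Finset.mem_univ, true_and]
      by_contra hc
      exact hk (by rw [hχdef]; exact if_neg hc)
    calc {k : Fin n | χ k ≠ 0}.ncard
        ≤ (↑(Finset.filter (fun k : Fin n => (k:ℕ) < r) Finset.univ) : Set (Fin n)).ncard :=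
          Set.ncard_le_ncard hsub (Finset.finite_toSet _)
      _ = (Finset.filter (fun k : Fin n => (k:ℕ) < r) Finset.univ).card :=
          Set.ncard_coe_finset _
      _ ≤ (Finset.range r).card := Finset.card_le_card_of_injOn Fin.val
            (fun k hk => Finset.mem_range.mpr (Finset.mem_filter.mp hk).2)
            (Fin.val_injective.injOn)
      _ = r := Finset.card_range r
  -- the sandwich identity
  have hdEne : ∀ k : Fin n,
      (if (k:ℕ) < r then Complex.exp (Complex.I * ((φ k / 2 : ℝ) : ℂ)) else 1) ≠ 0 := by
    intro k
    split_ifs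
    · exact Complex.exp_ne_zero _
    · exact one_ne_zero
  have hBid : E⁻¹ * A * E⁻¹ = T⁻¹ * Matrix.diagonal (fun k : Fin n =>
      if (k : ℕ) < r then 1 else Complex.exp (Complex.I * (φ k : ℂ))) * (T⁻¹)ᴴ := by
    rw [hE, hdec, phaseDiag,
      sandwich_eq T hT
        (fun k : Fin n => if (k:ℕ) < r then Complex.exp (Complex.I * ((φ k / 2 : ℝ) : ℂ)) else 1)
        (fun k : Fin n => Complex.exp (Complex.I * ((φ k : ℝ) : ℂ))) hdEne]
    have hfun : (fun k : Fin n =>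
        (if (k:ℕ) < r then Complex.exp (Complex.I * ((φ k / 2 : ℝ) : ℂ)) else 1)⁻¹
          * Complex.exp (Complex.I * ((φ k : ℝ) : ℂ))
          * (if (k:ℕ) < r then Complex.exp (Complex.I * ((φ k / 2 : ℝ) : ℂ)) else 1)⁻¹)
        = fun k : Fin n => if (k : ℕ) < r then 1 else Complex.exp (Complex.I * (φ k : ℂ)) := by
      funext k
      split_ifs with h
      · rw [← Complex.exp_neg, ← Complex.exp_add, ← Complex.exp_add,
          show -(Complex.I * ((φ k / 2 : ℝ) : ℂ)) + Complex.I * ((φ k : ℝ) : ℂ)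
            + -(Complex.I * ((φ k / 2 : ℝ) : ℂ)) = 0 from by push_cast; ring]
        exact Complex.exp_zero
      · rw [inv_one, one_mul, mul_one]
    rw [hfun]
  -- properties of δ
  have hδval : ∀ k, 0 ≤ δ k ∧ δ k < Real.pi := by
    intro k
    rw [hδdef]
    dsimp only
    split_ifs with h
    · exact ⟨hφ0 _, hφπ _⟩
    · exact ⟨le_refl 0, hpi⟩
  have hδa : Antitone δ := by
    intro k l hkl
    have hkl' : (k:ℕ) ≤ (l:ℕ) := hkl
    rw [hδdef]
    dsimp only
    by_cases hk : (k:ℕ) < n - r <;> by_cases hl : (l:ℕ) < n - r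
    · rw [dif_pos hk, dif_pos hl]
      exact hφsort (Fin.mk_le_mk.mpr (by omega))
    · rw [dif_pos hk, dif_neg hl]
      exact hφ0 _
    · exact absurd (lt_of_le_of_lt hkl' hl) hk
    · rw [dif_neg hk, dif_neg hl]
  -- the permutation
  open Fin.NatCast in
  set σ : Equiv.Perm (Fin n) := Equiv.addRight ((r : ℕ) : Fin n) with hσdef
  have hσval : ∀ k : Fin n, ((σ k : Fin n) : ℕ) = ((k:ℕ) + r % n) % n := by
    intro k
    rw [hσdef]
    simp only [Equiv.coe_addRight]
    open Fin.NatCast in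
    rw [Fin.add_def, Fin.val_natCast]
  have hθσ : ∀ k : Fin n, θ (σ k) = δ k := by
    intro k
    have hσv := hσval k
    have hklt := k.isLt
    rw [hθdef, hδdef]
    dsimp only
    by_cases hk : (k:ℕ) < n - r
    · have hrn : r < n := by omega
      have hv : ((σ k : Fin n) : ℕ) = (k:ℕ) + r := by
        rw [hσv, Nat.mod_eq_of_lt hrn, Nat.mod_eq_of_lt (by omega)]
      rw [if_neg (by omega), dif_pos hk]
      congr 1
      exact Fin.ext hv
    · rw [dif_neg hk]
      rcases Nat.lt_or_ge r n with hrn | hrn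
      · have hv : ((σ k : Fin n) : ℕ) = (k:ℕ) + r - n := by
          rw [hσv, Nat.mod_eq_of_lt hrn, Nat.mod_eq_sub_mod (by omega),
            Nat.mod_eq_of_lt (by omega)]
        rw [if_pos (by omega)]
      · have hreq : r = n := le_antisymm hr hrn
        have hv : ((σ k : Fin n) : ℕ) = (k:ℕ) := by
          rw [hσv, hreq, Nat.mod_self, Nat.add_zero, Nat.mod_eq_of_lt hklt]
        rw [if_pos (by omega)]
  -- decomposition of E⁻¹ A E⁻¹
  have hUunit : IsUnit ((T⁻¹)ᴴ) :=
    (Matrix.isUnit_conjTranspose _).mpr (isUnit_inv_matrix T hT)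
  obtain ⟨V, hV, hVdec⟩ :=
    perm_decomp ((T⁻¹)ᴴ) hUunit (fun k => Complex.exp (Complex.I * (θ k : ℂ))) σ
  have hBdec : E⁻¹ * A * E⁻¹ = Vᴴ * phaseDiag δ * V := by
    rw [hBid]
    have h1 : (fun k : Fin n => Complex.exp (Complex.I * ((δ k : ℝ) : ℂ)))
        = (fun k => Complex.exp (Complex.I * (θ k : ℂ))) ∘ ⇑σ := by
      funext k
      show _ = Complex.exp (Complex.I * ((θ (σ k) : ℝ) : ℂ))
      rw [hθσ k]
    have h2 : (fun k : Fin n => if (k : ℕ) < r then (1:ℂ)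
          else Complex.exp (Complex.I * (φ k : ℂ)))
        = fun k => Complex.exp (Complex.I * (θ k : ℂ)) := by
      funext k
      rw [hθdef]
      dsimp only
      split_ifs with h
      · rw [Complex.ofReal_zero, mul_zero, Complex.exp_zero]
      · rfl
    rw [show phaseDiag δ
        = Matrix.diagonal ((fun k => Complex.exp (Complex.I * (θ k : ℂ))) ∘ ⇑σ) from by
      rw [phaseDiag, h1]]
    rw [hVdec, conjTranspose_conjTranspose, h2]
  have hBcan : IsCanonicalPhases (E⁻¹ * A * E⁻¹) δ := by
    refine ⟨hδa, ?_, ?_, ?_, V, hV, hBdec⟩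
    · intro i j
      linarith [(hδval i).2, (hδval j).1]
    · rw [iSup_eq_of_antitone hn' δ hδa, iInf_eq_of_antitone hn' δ hδa]
      linarith [(hδval ⟨0,hn'⟩).1, (hδval ⟨n-1, by omega⟩).1]
    · rw [iSup_eq_of_antitone hn' δ hδa, iInf_eq_of_antitone hn' δ hδa]
      linarith [(hδval ⟨0,hn'⟩).2, (hδval ⟨n-1, by omega⟩).2]
  have hphB : phases (E⁻¹ * A * E⁻¹) = δ := phases_eq hn' hBcan
  have hsecB : IsSectorial (E⁻¹ * A * E⁻¹) := by
    rw [hBdec]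
    exact sectorial_of_decomp V hV δ (fun k => (hδval k).1) (fun k => (hδval k).2)
  refine ⟨hsecE, hprankE, hBid, ⟨hsecB, fun k => ⟨?_, ?_⟩⟩, ?_⟩
  · rw [hphB]
    exact (hδval k).1
  · rw [hphB]
    exact (hδval k).2
  · rw [hphB]
    have hmapσ : Finset.univ.val.map ⇑σ = Finset.univ.val := by
      have h := Finset.map_univ_equiv σ
      have := congrArg Finset.val h
      rwa [Finset.map_val] at this
    calc Finset.univ.val.map δ
        = Finset.univ.val.map (θ ∘ ⇑σ) := by
          congr 1
          funext k
          exact (hθσ k).symm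
      _ = (Finset.univ.val.map ⇑σ).map θ := (Multiset.map_map θ (⇑σ) Finset.univ.val).symm
      _ = Finset.univ.val.map θ := by rw [hmapσ]


end LowPrank
end
end

section
/- Let A = diag(11+i, 11−i) ∈ ℂ^{2×2} and M = [[10, −√2],[−√2, 10]]. Then M is Hermitian positive definite, A is sectorial with prank(A) = 2, and rank(A − M) = 1; in particular, for this A the inequality prank(A) ≥ min{ rank(A − M') : M' Hermitian positive definite } is strict. -/
noncomputable section

open Matrix
open scoped Classical ComplexOrder

namespace LowPrank

variable {n : ℕ}

/-! ### Auxiliary lemmas for the example -/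

lemma aux_sup2 (φ : Fin 2 → ℝ) (h : φ 1 ≤ φ 0) : (⨆ i, φ i) = φ 0 :=
  le_antisymm (ciSup_le fun i => by fin_cases i <;> simp [h])
    (le_ciSup (Set.finite_range φ).bddAbove 0)

lemma aux_inf2 (φ : Fin 2 → ℝ) (h : φ 1 ≤ φ 0) : (⨅ i, φ i) = φ 1 :=
  le_antisymm (ciInf_le (Set.finite_range φ).bddBelow 1)
    (le_ciInf fun i => by fin_cases i <;> simp [h])

lemma aux_sqrt122_pos : (0:ℝ) < Real.sqrt 122 := Real.sqrt_pos.2 (by norm_num)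

lemma aux_exists_canon :
    ∃ φ, IsCanonicalPhases !![11 + Complex.I, 0; 0, 11 - Complex.I] φ := by
  set θ : ℝ := Real.arctan (1/11) with hθdef
  have hθ0 : 0 < θ := by
    rw [hθdef, ← Real.arctan_zero]
    exact Real.arctan_strictMono (by norm_num)
  have hθπ : θ < Real.pi / 2 := Real.arctan_lt_pi_div_two _
  have hπ := Real.pi_pos
  have h121 : Real.sqrt 121 = 11 := by
    rw [show (121:ℝ) = 11^2 by norm_num, Real.sqrt_sq (by norm_num)]
  have hden : Real.sqrt (1 + (1/11)^2) = Real.sqrt 122 / 11 := by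
    rw [show (1 + (1/11)^2 : ℝ) = 122/121 by norm_num, Real.sqrt_div (by norm_num) 121, h121]
  have h122ne : Real.sqrt 122 ≠ 0 := aux_sqrt122_pos.ne'
  have hcos : Real.sqrt 122 * Real.cos θ = 11 := by
    rw [hθdef, Real.cos_arctan, hden]
    field_simp
  have hsin : Real.sqrt 122 * Real.sin θ = 1 := by
    rw [hθdef, Real.sin_arctan, hden]
    field_simp
  have key0 : ((Real.sqrt 122 : ℝ) : ℂ) * Complex.exp (Complex.I * (θ : ℂ)) = 11 + Complex.I := by
    rw [mul_comm Complex.I]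
    apply Complex.ext
    · simp only [Complex.mul_re, Complex.ofReal_re, Complex.ofReal_im,
        Complex.exp_ofReal_mul_I_re, Complex.exp_ofReal_mul_I_im, zero_mul, sub_zero]
      simpa using hcos
    · simp only [Complex.mul_im, Complex.ofReal_re, Complex.ofReal_im,
        Complex.exp_ofReal_mul_I_re, Complex.exp_ofReal_mul_I_im, zero_mul, add_zero]
      simpa using hsin
  have key1 : ((Real.sqrt 122 : ℝ) : ℂ) * Complex.exp (Complex.I * ((-θ : ℝ) : ℂ)) = 11 - Complex.I := by
    rw [show (((-θ : ℝ)) : ℂ) = -(θ:ℂ) by push_cast; ring,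
      show Complex.I * (-(θ:ℂ)) = ((-θ : ℝ) : ℂ) * Complex.I by push_cast; ring]
    apply Complex.ext
    · simp only [Complex.mul_re, Complex.ofReal_re, Complex.ofReal_im,
        Complex.exp_ofReal_mul_I_re, Complex.exp_ofReal_mul_I_im, zero_mul, sub_zero,
        Real.cos_neg]
      simpa using hcos
    · simp only [Complex.mul_im, Complex.ofReal_re, Complex.ofReal_im,
        Complex.exp_ofReal_mul_I_re, Complex.exp_ofReal_mul_I_im, zero_mul, add_zero,
        Real.sin_neg]
      simp only [Complex.sub_im, Complex.I_im, Complex.ofReal_im]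
      simp
      linarith [hsin]
  refine ⟨![θ, -θ], ?_, ?_, ?_, ?_, ?_⟩
  · intro i j hij
    fin_cases i <;> fin_cases j <;> simp_all <;> linarith
  · intro i j
    fin_cases i <;> fin_cases j <;> simp <;> linarith
  · rw [aux_sup2 _ (by simp; linarith), aux_inf2 _ (by simp; linarith)]
    simp
    linarith
  · rw [aux_sup2 _ (by simp; linarith), aux_inf2 _ (by simp; linarith)]
    simp
    linarith
  · set c : ℝ := Real.sqrt (Real.sqrt 122) with hc
    have hcpos : 0 < c := Real.sqrt_pos.2 aux_sqrt122_pos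
    have hcc : (c : ℂ) * (c : ℂ) = ((Real.sqrt 122 : ℝ) : ℂ) := by
      rw [← Complex.ofReal_mul, Real.mul_self_sqrt aux_sqrt122_pos.le]
    have hstarc : star ((c:ℂ)) = (c:ℂ) := by
      rw [Complex.star_def, Complex.conj_ofReal]
    refine ⟨Matrix.diagonal (fun _ => (c : ℂ)), ?_, ?_⟩
    · rw [Matrix.isUnit_iff_isUnit_det, Matrix.det_diagonal, Fin.prod_univ_two, hcc,
        isUnit_iff_ne_zero]
      exact_mod_cast aux_sqrt122_pos.ne'
    · have hA : !![(11:ℂ) + Complex.I, 0; 0, 11 - Complex.I]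
          = Matrix.diagonal ![11 + Complex.I, 11 - Complex.I] := by
        ext i j
        fin_cases i <;> fin_cases j <;> simp [Matrix.diagonal]
      rw [hA, phaseDiag, Matrix.diagonal_conjTranspose, Matrix.diagonal_mul_diagonal,
        Matrix.diagonal_mul_diagonal]
      refine congrArg Matrix.diagonal (funext fun k => ?_)
      have key1' : ((Real.sqrt 122 : ℝ) : ℂ) * Complex.exp (Complex.I * -(θ:ℂ)) = 11 - Complex.I := by
        rw [show Complex.I * -(θ:ℂ) = Complex.I * ((-θ : ℝ):ℂ) by push_cast; ring]
        exact key1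
      fin_cases k
      · simp only [Fin.zero_eta, Pi.star_apply, hstarc, Matrix.cons_val_zero]
        linear_combination (-1 : ℂ) * key0 - Complex.exp (Complex.I * (θ:ℂ)) * hcc
      · simp only [Fin.mk_one, Pi.star_apply, hstarc, Matrix.cons_val_one, Matrix.head_cons,
          Matrix.cons_val_zero, Complex.ofReal_neg]
        linear_combination (-1 : ℂ) * key1' - Complex.exp (Complex.I * -(θ:ℂ)) * hcc

lemma aux_canon_ne {φ : Fin 2 → ℝ}
    (h : IsCanonicalPhases !![11 + Complex.I, 0; 0, 11 - Complex.I] φ) : ∀ k, φ k ≠ 0 := by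
  obtain ⟨hanti, hsp, hm1, hm2, T, hTu, hdec⟩ := h
  have hπ := Real.pi_pos
  have h10 : φ 1 ≤ φ 0 := hanti (by norm_num : (0 : Fin 2) ≤ 1)
  rw [aux_sup2 _ h10, aux_inf2 _ h10] at hm1 hm2
  have hdetT : T.det ≠ 0 := by
    have := (Matrix.isUnit_iff_isUnit_det T).1 hTu
    exact this.ne_zero
  -- cos (φ 0) > 0
  have hcos0 : 0 < Real.cos (φ 0) := by
    set x : Fin 2 → ℂ := T⁻¹ *ᵥ Pi.single 0 1 with hx
    have hTx : T *ᵥ x = Pi.single 0 1 := by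
      rw [hx, Matrix.mulVec_mulVec, Matrix.mul_nonsing_inv _ ((Matrix.isUnit_iff_isUnit_det T).1 hTu), Matrix.one_mulVec]
    have hvalA : star x ⬝ᵥ (!![11 + Complex.I, 0; 0, 11 - Complex.I]) *ᵥ x
        = Complex.exp (Complex.I * ((φ 0 : ℝ) : ℂ)) := by
      rw [hdec, ← Matrix.mulVec_mulVec, ← Matrix.mulVec_mulVec, hTx,
        Matrix.dotProduct_mulVec, ← Matrix.star_mulVec, hTx]
      simp [phaseDiag, Matrix.mulVec_diagonal, dotProduct, Fin.sum_univ_two,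
        Pi.single_apply]
    have hre : (star x ⬝ᵥ (!![11 + Complex.I, 0; 0, 11 - Complex.I]) *ᵥ x).re
        = 11 * (Complex.normSq (x 0) + Complex.normSq (x 1)) := by
      simp [dotProduct, Matrix.mulVec, Fin.sum_univ_two, Complex.normSq_apply,
        Matrix.vecHead, Matrix.vecTail, Complex.mul_re, Complex.mul_im, Complex.add_re, Complex.add_im]
      ring
    have hxne : x ≠ 0 := by
      intro hcon
      rw [hcon, Matrix.mulVec_zero] at hTx
      have := congrFun hTx 0
      simp [Pi.single_apply] at this
    have hnpos : 0 < Complex.normSq (x 0) + Complex.normSq (x 1) := by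
      have hor : x 0 ≠ 0 ∨ x 1 ≠ 0 := by
        by_contra hcon
        push_neg at hcon
        exact hxne (funext fun i => by fin_cases i <;> simp [hcon.1, hcon.2])
      rcases hor with hne | hne
      · have h1 := Complex.normSq_pos.2 hne
        have h2 := Complex.normSq_nonneg (x 1)
        linarith
      · have h1 := Complex.normSq_pos.2 hne
        have h2 := Complex.normSq_nonneg (x 0)
        linarith
    have : Real.cos (φ 0) = 11 * (Complex.normSq (x 0) + Complex.normSq (x 1)) := by
      rw [← hre, hvalA, mul_comm Complex.I, Complex.exp_ofReal_mul_I_re]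
    rw [this]
    positivity
  -- determinant equation
  have hdetA : (!![11 + Complex.I, 0; 0, 11 - Complex.I]).det = 122 := by
    rw [Matrix.det_fin_two_of]
    ring_nf
    rw [Complex.I_sq]
    ring
  have hdeteq : Complex.exp (((φ 0 + φ 1 : ℝ) : ℂ) * Complex.I)
      * ((Complex.normSq T.det : ℝ) : ℂ) = 122 := by
    have h1 : (!![11 + Complex.I, 0; 0, 11 - Complex.I]).det
        = star T.det * (Complex.exp (Complex.I * ((φ 0 : ℝ):ℂ)) * Complex.exp (Complex.I * ((φ 1 : ℝ):ℂ))) * T.det := by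
      rw [hdec, Matrix.det_mul, Matrix.det_mul, Matrix.det_conjTranspose, phaseDiag,
        Matrix.det_diagonal, Fin.prod_univ_two]
    rw [hdetA] at h1
    have hE : Complex.exp (Complex.I * ((φ 0 : ℝ):ℂ)) * Complex.exp (Complex.I * ((φ 1 : ℝ):ℂ))
        = Complex.exp (((φ 0 + φ 1 : ℝ) : ℂ) * Complex.I) := by
      rw [← Complex.exp_add]
      congr 1
      push_cast
      ring
    rw [hE] at h1
    rw [h1, Complex.normSq_eq_conj_mul_self]
    simp only [Complex.star_def]
    ring
  have hn : 0 < Complex.normSq T.det := Complex.normSq_pos.2 hdetT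
  have him : Real.sin (φ 0 + φ 1) * Complex.normSq T.det = 0 := by
    have h := congrArg Complex.im hdeteq
    simp only [Complex.mul_im, Complex.exp_ofReal_mul_I_re, Complex.exp_ofReal_mul_I_im,
      Complex.ofReal_re, Complex.ofReal_im, mul_zero, zero_mul, add_zero, zero_add] at h
    rw [h]
    norm_num
  have hre2 : Real.cos (φ 0 + φ 1) * Complex.normSq T.det = 122 := by
    have h := congrArg Complex.re hdeteq
    simp only [Complex.mul_re, Complex.exp_ofReal_mul_I_re, Complex.exp_ofReal_mul_I_im,
      Complex.ofReal_re, Complex.ofReal_im, mul_zero, zero_mul, sub_zero] at h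
    rw [h]
    norm_num
  have hsin : Real.sin (φ 0 + φ 1) = 0 := by
    rcases mul_eq_zero.1 him with h | h
    · exact h
    · exact absurd h hn.ne'
  have hcoss : 0 < Real.cos (φ 0 + φ 1) := by nlinarith
  obtain ⟨m, hmπ⟩ := Real.sin_eq_zero_iff.1 hsin
  have hcosm : Real.cos (φ 0 + φ 1) = (-1 : ℝ)^m := by
    rw [← hmπ]
    simpa using Real.cos_add_int_mul_pi 0 m
  have heven : Even m := by
    by_contra hodd
    rw [Int.not_even_iff_odd] at hodd
    rw [hodd.neg_one_zpow] at hcosm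
    linarith
  obtain ⟨j, hj⟩ := heven
  have hmj : (m : ℝ) = 2 * (j : ℝ) := by
    rw [hj]
    push_cast
    ring
  have hb1 : -(2*Real.pi) < φ 0 + φ 1 := by linarith
  have hb2 : φ 0 + φ 1 ≤ 2*Real.pi := by linarith
  have hjcast : (-1 : ℝ) < (j : ℝ) ∧ (j : ℝ) ≤ 1 := by
    constructor <;> nlinarith [hmπ, hmj]
  have hj01 : j = 0 ∨ j = 1 := by
    have h1' : (-1 : ℤ) < j := by exact_mod_cast hjcast.1
    have h2' : (j : ℤ) ≤ 1 := by exact_mod_cast hjcast.2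
    omega
  have hs0 : φ 0 + φ 1 = 0 := by
    rcases hj01 with hj0 | hj1
    · rw [← hmπ, show (m:ℝ) = 0 by rw [hmj, hj0]; norm_num, zero_mul]
    · exfalso
      rw [hj1] at hmj
      norm_num at hmj
      have hsum : φ 0 + φ 1 = 2 * Real.pi := by
        rw [← hmπ, hmj]
      have hge : Real.pi ≤ φ 0 := by linarith
      have hlt : φ 0 < 3 * Real.pi / 2 := by
        have := hsp 0 1
        linarith
      have := Real.cos_nonpos_of_pi_div_two_le_of_le (x := φ 0) (by linarith) (by linarith)
      linarith
  have hφ0ne : φ 0 ≠ 0 := by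
    intro h0
    have h1z : φ 1 = 0 := by linarith
    have hD : phaseDiag φ = 1 := by
      rw [phaseDiag]
      have hfun : (fun k => Complex.exp (Complex.I * ((φ k : ℝ):ℂ))) = fun _ => (1:ℂ) :=
        funext fun k => by fin_cases k <;> simp [h0, h1z]
      rw [hfun]
      exact Matrix.diagonal_one
    rw [hD, mul_one] at hdec
    have := congrArg (fun B => (B 0 0).im) hdec
    simp [Matrix.mul_apply, Matrix.conjTranspose_apply, Fin.sum_univ_two, Complex.mul_im] at this
    linarith [this]
  intro k
  fin_cases k
  · exact hφ0ne
  · show φ 1 ≠ 0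
    rw [show φ 1 = -φ 0 by linarith]
    exact neg_ne_zero.2 hφ0ne

lemma aux_prank : prank !![11 + Complex.I, 0; 0, 11 - Complex.I] = 2 := by
  have hex := aux_exists_canon
  have hph : phases !![11 + Complex.I, 0; 0, 11 - Complex.I] = hex.choose := by
    rw [phases]
    exact dif_pos hex
  have hne := aux_canon_ne hex.choose_spec
  rw [prank]
  have huniv : {k : Fin 2 | phases (!![11 + Complex.I, 0; 0, 11 - Complex.I]) k ≠ 0}
      = Set.univ := by
    ext k
    simp [hph, hne k]
  rw [huniv, Set.ncard_univ]
  simp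

lemma aux_sectorial : IsSectorial !![11 + Complex.I, 0; 0, 11 - Complex.I] := by
  intro x hx
  have hx' : Complex.normSq (x 0) + Complex.normSq (x 1) = 1 := by
    have h := congrArg Complex.re hx
    simp [dotProduct, Fin.sum_univ_two, Complex.normSq_apply, Complex.mul_re] at h
    rw [← h]
    simp [Complex.normSq_apply]
  intro hcon
  have h := congrArg Complex.re hcon
  have hre : (star x ⬝ᵥ (!![11 + Complex.I, 0; 0, 11 - Complex.I]) *ᵥ x).re
      = 11 * (Complex.normSq (x 0) + Complex.normSq (x 1)) := by
    simp [dotProduct, Matrix.mulVec, Fin.sum_univ_two, Complex.normSq_apply,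
      Matrix.vecHead, Matrix.vecTail, Complex.mul_re, Complex.mul_im, Complex.add_re, Complex.add_im]
    ring
  rw [hre, hx'] at h
  norm_num at h

lemma aux_posdef :
    (!![(10 : ℂ), -((Real.sqrt 2 : ℝ) : ℂ); -((Real.sqrt 2 : ℝ) : ℂ), (10 : ℂ)]).PosDef := by
  rw [Matrix.posDef_iff_dotProduct_mulVec]
  constructor
  · ext i j
    fin_cases i <;> fin_cases j <;>
      simp [Matrix.conjTranspose_apply, Complex.conj_ofReal]
  · intro x hx
    set s := Real.sqrt 2 with hs
    have hval : star x ⬝ᵥ (!![(10 : ℂ), -(s : ℂ); -(s : ℂ), (10 : ℂ)]) *ᵥ x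
        = 10 * ((Complex.normSq (x 0) : ℝ) : ℂ) + 10 * ((Complex.normSq (x 1) : ℝ) : ℂ)
          - (s:ℂ) * ((starRingEnd ℂ) (x 0) * x 1 + (starRingEnd ℂ) ((starRingEnd ℂ) (x 0) * x 1)) := by
      simp [dotProduct, Matrix.mulVec, Fin.sum_univ_two, Complex.normSq_eq_conj_mul_self,
        Matrix.vecHead, Matrix.vecTail]
      ring
    rw [hval, Complex.add_conj]
    have hcast : 10 * ((Complex.normSq (x 0) : ℝ) : ℂ) + 10 * ((Complex.normSq (x 1) : ℝ) : ℂ)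
        - (s:ℂ) * ((2 * ((starRingEnd ℂ) (x 0) * x 1).re : ℝ) : ℂ)
        = (((10 * Complex.normSq (x 0) + 10 * Complex.normSq (x 1)
            - s * (2 * ((starRingEnd ℂ) (x 0) * x 1).re) : ℝ)) : ℂ) := by
      push_cast
      ring
    rw [hcast, Complex.zero_lt_real]
    have h0 : Complex.normSq (x 0) + Complex.normSq (x 1) > 0 := by
      have hor : x 0 ≠ 0 ∨ x 1 ≠ 0 := by
        by_contra hcon
        push_neg at hcon
        exact hx (funext fun i => by fin_cases i <;> simp [hcon.1, hcon.2])
      rcases hor with h | h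
      · have h1 := Complex.normSq_pos.2 h
        have h2 := Complex.normSq_nonneg (x 1)
        linarith
      · have h1 := Complex.normSq_pos.2 h
        have h2 := Complex.normSq_nonneg (x 0)
        linarith
    have hre : ((starRingEnd ℂ) (x 0) * x 1).re ≤ ‖x 0‖ * ‖x 1‖ := by
      calc ((starRingEnd ℂ) (x 0) * x 1).re
          ≤ ‖(starRingEnd ℂ) (x 0) * x 1‖ := Complex.re_le_norm _
        _ = ‖x 0‖ * ‖x 1‖ := by simp
    have hsq0 : Complex.normSq (x 0) = ‖x 0‖ ^ 2 := (Complex.sq_norm _).symm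
    have hsq1 : Complex.normSq (x 1) = ‖x 1‖ ^ 2 := (Complex.sq_norm _).symm
    have hs2 : s < 10 := by
      rw [hs]
      nlinarith [Real.sq_sqrt (by norm_num : (2:ℝ) ≥ 0), Real.sqrt_nonneg 2]
    have hsnn : 0 ≤ s := Real.sqrt_nonneg 2
    nlinarith [sq_nonneg (‖x 0‖ - ‖x 1‖),
      norm_nonneg (x 0), norm_nonneg (x 1)]

lemma aux_rank :
    (!![11 + Complex.I, 0; 0, 11 - Complex.I] -
      !![(10 : ℂ), -((Real.sqrt 2 : ℝ) : ℂ); -((Real.sqrt 2 : ℝ) : ℂ), (10 : ℂ)]).rank = 1 := by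
  set B := !![11 + Complex.I, 0; 0, 11 - Complex.I] -
      !![(10 : ℂ), -((Real.sqrt 2 : ℝ) : ℂ); -((Real.sqrt 2 : ℝ) : ℂ), (10 : ℂ)] with hB
  have hsq : ((Real.sqrt 2 : ℝ) : ℂ) ^ 2 = 2 := by
    rw [sq, ← Complex.ofReal_mul, Real.mul_self_sqrt (by norm_num)]
    norm_num
  have hfac : B = (!![1 + Complex.I; ((Real.sqrt 2 : ℝ) : ℂ)] : Matrix (Fin 2) (Fin 1) ℂ) *
      (!![1, ((Real.sqrt 2 : ℝ) : ℂ) * (1 - Complex.I) / 2] : Matrix (Fin 1) (Fin 2) ℂ) := by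
    ext i j
    fin_cases i <;> fin_cases j <;> simp [hB, Matrix.mul_apply, Fin.sum_univ_one] <;> ring_nf <;>
      simp only [Complex.I_sq, hsq] <;> ring_nf
  have hle : B.rank ≤ 1 := by
    rw [hfac]
    calc _ ≤ _ := Matrix.rank_mul_le _ _
    _ ≤ (!![1 + Complex.I; ((Real.sqrt 2 : ℝ) : ℂ)] : Matrix (Fin 2) (Fin 1) ℂ).rank :=
        inf_le_left
    _ ≤ Fintype.card (Fin 1) := Matrix.rank_le_card_width _
    _ = 1 := by simp
  have hge : 0 < B.rank := by
    rw [Matrix.rank, Module.finrank_pos_iff_exists_ne_zero]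
    refine ⟨⟨B *ᵥ Pi.single 0 1, LinearMap.mem_range_self _ _⟩, ?_⟩
    intro hcon
    have h : B *ᵥ Pi.single 0 1 = 0 := by simpa using congrArg Subtype.val hcon
    have h0 : (B *ᵥ Pi.single 0 1) 0 = 0 := congrFun h 0
    rw [hB] at h0
    simp [Matrix.mulVec, dotProduct, Fin.sum_univ_two] at h0
    have := congrArg Complex.im h0
    simp at this
  omega

/-- explicit example where `prank A > min rank (A - M')` over `M' ≻ 0`. -/
theorem prank_gt_min_rank_example :
    ∀ A M : Matrix (Fin 2) (Fin 2) ℂ,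
      A = !![11 + Complex.I, 0; 0, 11 - Complex.I] →
      M = !![(10 : ℂ), -((Real.sqrt 2 : ℝ) : ℂ); -((Real.sqrt 2 : ℝ) : ℂ), (10 : ℂ)] →
      M.PosDef ∧ IsSectorial A ∧ prank A = 2 ∧ (A - M).rank = 1 ∧
      sInf {k : ℕ | ∃ M' : Matrix (Fin 2) (Fin 2) ℂ, M'.PosDef ∧ (A - M').rank = k} < prank A := by
  intro A M hA hM
  subst hA hM
  refine ⟨aux_posdef, aux_sectorial, aux_prank, aux_rank, ?_⟩
  rw [aux_prank]
  have hmem : 1 ∈ {k : ℕ | ∃ M' : Matrix (Fin 2) (Fin 2) ℂ, M'.PosDef ∧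
      (!![11 + Complex.I, 0; 0, 11 - Complex.I] - M').rank = k} :=
    ⟨_, aux_posdef, aux_rank⟩
  exact lt_of_le_of_lt (Nat.sInf_le hmem) (by norm_num)

end LowPrank
end
end

section
/- Let n ≥ 1, 0 ≤ r ≤ n, and let a ∈ ℝⁿ satisfy π/2 > a₁ ≥ a₂ ≥ ⋯ ≥ aₙ ≥ 0. Let x ∈ ℝⁿ be any vector with x₁ ≥ x₂ ≥ ⋯ ≥ xₙ, 0 ≤ x_k < π/2 for all k, and x_k = 0 for all k > r. Then the vector (0,…,0,a_{r+1},…,aₙ) (first r entries zero) is weakly submajorized by the vector (|a₁−x₁|,…,|aₙ−xₙ|): for every ℓ ∈ {1,…,n}, Σ_{k=r+1}^{min(n,r+ℓ)} a_k is at most the sum of the ℓ largest entries of (|a₁−x₁|,…,|aₙ−xₙ|). -/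
noncomputable section

open Matrix
open scoped Classical ComplexOrder

namespace LowPrank

variable {n : ℕ}

/-- The sum of the `m` largest entries of a multiset of reals. -/
noncomputable def sumLargest (s : Multiset ℝ) (m : ℕ) : ℝ :=
  ((s.sort (· ≤ ·)).reverse.take m).sum


lemma sublist_sum_le_take : ∀ {u d : List ℝ}, u.Sublist d → d.Pairwise (· ≥ ·) →
    u.sum ≤ (d.take u.length).sum := by
  intro u d h
  induction h with
  | slnil => simp
  | cons a h ih =>
    rename_i u d
    intro hd
    rw [List.pairwise_cons] at hd
    obtain ⟨ha, hd⟩ := hd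
    match u, h with
    | [], _ => simp
    | b :: u', h =>
      have hlen : u'.length + 1 ≤ d.length := h.length_le
      have ihs := ih hd
      calc (b :: u').sum ≤ (d.take (u'.length + 1)).sum := ihs
        _ ≤ ((a :: d).take (b :: u').length).sum := by
            rw [List.sum_take_succ d u'.length (by omega)]
            simp only [List.length_cons, List.take_succ_cons]
            have hma : d[u'.length]'(by omega) ≤ a := ha _ (List.getElem_mem _)
            rw [List.sum_cons]
            linarith
  | cons_cons a h ih =>
    rename_i u d
    intro hd
    rw [List.pairwise_cons] at hd
    simp only [List.length_cons, List.take_succ_cons, List.sum_cons]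
    linarith [ih hd.2]

lemma take_sum_mono {l : List ℝ} (hl : ∀ x ∈ l, 0 ≤ x) {m m' : ℕ} (h : m ≤ m') :
    (l.take m).sum ≤ (l.take m').sum := by
  have hsub : (l.take m).Sublist (l.take m') := by
    rw [← min_eq_left h, ← List.take_take]
    exact List.take_sublist _ _
  exact List.Sublist.sum_le_sum hsub (fun x hx => hl x (List.mem_of_mem_take hx))

lemma sum_le_sumLargest {s t : Multiset ℝ} (hs : ∀ x ∈ s, 0 ≤ x) (hts : t ≤ s)
    {m : ℕ} (htm : Multiset.card t ≤ m) : t.sum ≤ sumLargest s m := by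
  set d := (s.sort (· ≤ ·)).reverse with hdd
  have hds : (d : Multiset ℝ) = s := by
    rw [hdd, Multiset.coe_reverse, Multiset.sort_eq]
  have hd : d.Pairwise (· ≥ ·) := by
    rw [hdd]
    exact (List.pairwise_reverse (R := (· ≥ ·))).mpr (Multiset.pairwise_sort s (· ≤ ·))
  have hts' : t ≤ (d : Multiset ℝ) := hds ▸ hts
  rw [← Multiset.coe_toList t, Multiset.coe_le] at hts'
  obtain ⟨u, hperm, hsub⟩ := hts'
  have h1 : t.sum = u.sum := by
    rw [← Multiset.coe_toList t, Multiset.sum_coe]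
    exact (hperm.sum_eq).symm
  have h2 : u.length = Multiset.card t := by
    rw [hperm.length_eq, Multiset.length_toList]
  have hnn : ∀ x ∈ d, (0:ℝ) ≤ x := fun x hx => hs x (by rw [← hds]; exact_mod_cast hx)
  calc t.sum = u.sum := h1
    _ ≤ (d.take u.length).sum := sublist_sum_le_take hsub hd
    _ ≤ (d.take m).sum := take_sum_mono hnn (by omega)

/-- the truncated vector is weakly submajorized by `|a - x|`. -/
theorem truncated_weakly_submajorized
    (hn : 1 ≤ n) (r : ℕ) (hr : r ≤ n) (a x : Fin n → ℝ)
    (ha0 : ∀ k, 0 ≤ a k) (haπ : ∀ k, a k < Real.pi / 2) (hasort : Antitone a)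
    (hxsort : Antitone x) (hx0 : ∀ k, 0 ≤ x k) (hxπ : ∀ k, x k < Real.pi / 2)
    (hxr : ∀ k : Fin n, r ≤ (k : ℕ) → x k = 0) :
    ∀ ℓ : ℕ, 1 ≤ ℓ → ℓ ≤ n →
      (∑ k ∈ Finset.univ.filter (fun k : Fin n => r ≤ (k : ℕ) ∧ (k : ℕ) < r + ℓ), a k) ≤
      sumLargest (Finset.univ.val.map (fun k : Fin n => |a k - x k|)) ℓ := by

  intro ℓ hℓ1 hℓn
  set F := Finset.univ.filter (fun k : Fin n => r ≤ (k : ℕ) ∧ (k : ℕ) < r + ℓ) with hF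
  have hcard : F.card ≤ ℓ := by
    have := Finset.card_le_card_of_injOn (s := F) (t := Finset.range ℓ) (fun k : Fin n => (k : ℕ) - r)
      (fun k hk => by
        simp only [hF, Finset.coe_filter, Finset.mem_univ, true_and, Set.mem_setOf_eq] at hk
        simp only [Finset.coe_range, Set.mem_Iio]
        omega)
      (fun k1 h1 k2 h2 he => by
        rw [Finset.mem_coe, hF, Finset.mem_filter] at h1 h2
        simp only at he
        exact Fin.ext (by omega))
    simpa using this
  have hkey : (∑ k ∈ F, a k) = (F.val.map (fun k => |a k - x k|)).sum := by
    have : (F.val.map (fun k => |a k - x k|)).sum = ∑ k ∈ F, |a k - x k| := rfl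
    rw [this]
    apply Finset.sum_congr rfl
    intro k hk
    simp only [hF, Finset.mem_filter] at hk
    rw [hxr k hk.2.1, sub_zero, abs_of_nonneg (ha0 k)]
  rw [hkey]
  apply sum_le_sumLargest
  · intro y hy
    obtain ⟨k, _, rfl⟩ := Multiset.mem_map.mp hy
    exact abs_nonneg _
  · exact Multiset.map_le_map (Finset.val_le_iff.mpr (Finset.subset_univ F))
  · simpa using hcard


end LowPrank
end
end

section
/- Let A ∈ ℂ^{n×n} be sectorial and suppose its numerical range W(A) contains no positive real number, i.e., x*Ax ∉ ℝ_{>0} for every x ∈ ℂⁿ with ‖x‖₂ = 1. Then A has full phase-rank: prank(A) = n. -/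
noncomputable section

open Matrix
open scoped Classical ComplexOrder

namespace LowPrank

variable {n : ℕ}

section Aux

open Complex

/-! ### basic dot-product helpers -/

private lemma dot_conj (a b : Fin n → ℂ) :
    star a ⬝ᵥ b = (starRingEnd ℂ) (star b ⬝ᵥ a) := by
  simp only [dotProduct, map_sum, Pi.star_apply, RCLike.star_def]
  exact Finset.sum_congr rfl fun i _ => by rw [RingHom.map_mul, Complex.conj_conj]; ring

private lemma smul_dot_smul (c : ℂ) (x y : Fin n → ℂ) :
    star (c • x) ⬝ᵥ (c • y) = (starRingEnd ℂ) c * c * (star x ⬝ᵥ y) := by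
  rw [star_smul, smul_dotProduct, dotProduct_smul]
  simp only [smul_eq_mul, RCLike.star_def]
  ring

private lemma q_smul (A : Matrix (Fin n) (Fin n) ℂ) (c : ℂ) (x : Fin n → ℂ) :
    star (c • x) ⬝ᵥ A.mulVec (c • x)
      = (starRingEnd ℂ) c * c * (star x ⬝ᵥ A.mulVec x) := by
  rw [Matrix.mulVec_smul, dotProduct_smul, star_smul, smul_dotProduct]
  simp only [smul_eq_mul, RCLike.star_def]
  ring

private lemma q_expand (A : Matrix (Fin n) (Fin n) ℂ) (u y : Fin n → ℂ) (s t : ℂ) :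
    star (s • u + t • y) ⬝ᵥ A.mulVec (s • u + t • y)
      = (starRingEnd ℂ) s * s * (star u ⬝ᵥ A.mulVec u)
        + (starRingEnd ℂ) s * t * (star u ⬝ᵥ A.mulVec y)
        + (starRingEnd ℂ) t * s * (star y ⬝ᵥ A.mulVec u)
        + (starRingEnd ℂ) t * t * (star y ⬝ᵥ A.mulVec y) := by
  rw [Matrix.mulVec_add, Matrix.mulVec_smul, Matrix.mulVec_smul, star_add, star_smul, star_smul]
  simp only [add_dotProduct, dotProduct_add, smul_dotProduct,
    dotProduct_smul, smul_eq_mul, RCLike.star_def]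
  ring

private lemma dot_expand (u y : Fin n → ℂ) (s t : ℂ) :
    star (s • u + t • y) ⬝ᵥ (s • u + t • y)
      = (starRingEnd ℂ) s * s * (star u ⬝ᵥ u)
        + (starRingEnd ℂ) s * t * (star u ⬝ᵥ y)
        + (starRingEnd ℂ) t * s * (star y ⬝ᵥ u)
        + (starRingEnd ℂ) t * t * (star y ⬝ᵥ y) := by
  have := q_expand (1 : Matrix (Fin n) (Fin n) ℂ) u y s t
  simpa [Matrix.one_mulVec] using this

private lemma coe_of_im_zero {z : ℂ} (h : z.im = 0) : z = (z.re : ℂ) :=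
  Complex.ext (by simp) (by simp [h])

private lemma dot_self_coe (x : Fin n → ℂ) :
    star x ⬝ᵥ x = ((star x ⬝ᵥ x).re : ℂ) := by
  have h := dotProduct_star_self_nonneg x
  rw [Complex.le_def] at h
  exact coe_of_im_zero (by simpa using h.2.symm)

private lemma exists_normalized (x : Fin n → ℂ) (hx : x ≠ 0) :
    ∃ (y : Fin n → ℂ) (m : ℝ), 0 < m ∧ star y ⬝ᵥ y = 1 ∧
      ∀ A : Matrix (Fin n) (Fin n) ℂ,
        star x ⬝ᵥ A.mulVec x = (m : ℂ) * (star y ⬝ᵥ A.mulVec y) := by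
  have hpos : (0 : ℂ) < star x ⬝ᵥ x := dotProduct_star_self_pos_iff.mpr hx
  set m := (star x ⬝ᵥ x).re with hm
  have hm0 : 0 < m := (Complex.lt_def.mp hpos).1
  have hcoe : star x ⬝ᵥ x = (m : ℂ) := dot_self_coe x
  set c : ℂ := (((Real.sqrt m)⁻¹ : ℝ) : ℂ) with hc
  have hcconj : (starRingEnd ℂ) c = c := by rw [hc]; exact Complex.conj_ofReal _
  have hcc : (starRingEnd ℂ) c * c = ((m⁻¹ : ℝ) : ℂ) := by
    rw [hcconj, hc]
    push_cast
    rw [← mul_inv, ← Complex.ofReal_mul, Real.mul_self_sqrt hm0.le]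
  refine ⟨c • x, m, hm0, ?_, ?_⟩
  · rw [smul_dot_smul, hcc, hcoe]
    push_cast
    field_simp
  · intro A
    rw [q_smul, hcc]
    push_cast
    field_simp

end Aux


section TH

open Complex

/-- Toeplitz–Hausdorff key step: if `0` and `1` are in the numerical range, so is
every `t ∈ [0,1]`. -/
private lemma segment_zero_one (A : Matrix (Fin n) (Fin n) ℂ) {x y : Fin n → ℂ}
    (hx : star x ⬝ᵥ x = 1) (hy : star y ⬝ᵥ y = 1)
    (hqx : star x ⬝ᵥ A.mulVec x = 0) (hqy : star y ⬝ᵥ A.mulVec y = 1)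
    {t : ℝ} (ht0 : 0 ≤ t) (ht1 : t ≤ 1) :
    ∃ z, star z ⬝ᵥ z = 1 ∧ star z ⬝ᵥ A.mulVec z = (t : ℂ) := by
  classical
  set d := star x ⬝ᵥ A.mulVec y with hd
  set c := star y ⬝ᵥ A.mulVec x with hc
  set g : ℝ → ℝ := fun ψ =>
    (Complex.exp (-(ψ : ℂ) * Complex.I) * d + Complex.exp ((ψ : ℂ) * Complex.I) * c).im with hg
  have hgc : Continuous g := by
    apply Complex.continuous_im.comp
    apply Continuous.add
    · exact (Complex.continuous_exp.comp
        ((Complex.continuous_ofReal.neg).mul continuous_const)).mul continuous_const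
    · exact (Complex.continuous_exp.comp
        (Complex.continuous_ofReal.mul continuous_const)).mul continuous_const
  have hgpi : g Real.pi = - g 0 := by
    simp [hg, Complex.exp_pi_mul_I, neg_mul, Complex.exp_neg]
    ring
  obtain ⟨ψ, hψ⟩ : ∃ ψ : ℝ,
      (Complex.exp (-(ψ : ℂ) * Complex.I) * d + Complex.exp ((ψ : ℂ) * Complex.I) * c).im = 0 := by
    rcases le_total (g 0) 0 with hle | hle
    · obtain ⟨ψ, _, hψ⟩ := intermediate_value_Icc Real.pi_pos.le hgc.continuousOn
        (Set.mem_Icc.mpr ⟨hle, by rw [hgpi]; linarith⟩)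
      exact ⟨ψ, hψ⟩
    · obtain ⟨ψ, _, hψ⟩ := intermediate_value_Icc' Real.pi_pos.le hgc.continuousOn
        (Set.mem_Icc.mpr ⟨by rw [hgpi]; linarith, hle⟩)
      exact ⟨ψ, hψ⟩
  set e := Complex.exp ((ψ : ℂ) * Complex.I) with he
  have heconj : (starRingEnd ℂ) e = Complex.exp (-(ψ : ℂ) * Complex.I) := by
    rw [he, ← Complex.exp_conj]
    congr 1
    simp [Complex.conj_I, Complex.conj_ofReal]
  have hee : (starRingEnd ℂ) e * e = 1 := by
    rw [heconj, he, ← Complex.exp_add]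
    ring_nf
    exact Complex.exp_zero
  set u := e • x with hu
  have hu1 : star u ⬝ᵥ u = 1 := by rw [hu, smul_dot_smul, hee, hx, one_mul]
  have hqu : star u ⬝ᵥ A.mulVec u = 0 := by rw [hu, q_smul, hqx, mul_zero]
  have huy : star u ⬝ᵥ A.mulVec y = (starRingEnd ℂ) e * d := by
    rw [hu, star_smul, smul_dotProduct, hd]
    simp [smul_eq_mul]
  have hyu : star y ⬝ᵥ A.mulVec u = e * c := by
    rw [hu, Matrix.mulVec_smul, dotProduct_smul, hc]
    simp [smul_eq_mul]
  set w := star u ⬝ᵥ A.mulVec y + star y ⬝ᵥ A.mulVec u with hw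
  have hwim : w.im = 0 := by rw [hw, huy, hyu, heconj]; exact hψ
  set v := star u ⬝ᵥ y + star y ⬝ᵥ u with hv
  have hvim : v.im = 0 := by
    rw [hv, dot_conj y u]
    simp [Complex.add_im]
  have hvre : star u ⬝ᵥ y + star y ⬝ᵥ u = ((v.re : ℝ) : ℂ) := by
    rw [← hv]; exact coe_of_im_zero hvim
  have hwre : star u ⬝ᵥ A.mulVec y + star y ⬝ᵥ A.mulVec u = ((w.re : ℝ) : ℂ) := by
    rw [← hw]; exact coe_of_im_zero hwim
  -- the path
  set Z : ℝ → (Fin n → ℂ) := fun r =>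
    ((Real.cos r : ℂ)) • u + ((Real.sin r : ℂ)) • y with hZ
  have hone : ∀ r : ℝ, ((Real.cos r : ℂ))^2 + ((Real.sin r : ℂ))^2 = 1 := by
    intro r
    norm_cast
    exact Real.cos_sq_add_sin_sq r
  have hZdot : ∀ r, star (Z r) ⬝ᵥ (Z r)
      = ((1 + Real.cos r * Real.sin r * v.re : ℝ) : ℂ) := by
    intro r
    rw [hZ]
    rw [dot_expand, hu1, hy, Complex.conj_ofReal, Complex.conj_ofReal]
    simp only [Complex.ofReal_add, Complex.ofReal_mul, Complex.ofReal_one]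
    linear_combination ((Real.cos r : ℂ) * (Real.sin r : ℂ)) * hvre + hone r
  have hQ : ∀ r, star (Z r) ⬝ᵥ A.mulVec (Z r)
      = ((Real.sin r ^ 2 + Real.cos r * Real.sin r * w.re : ℝ) : ℂ) := by
    intro r
    rw [hZ]
    rw [q_expand, hqu, hqy, Complex.conj_ofReal, Complex.conj_ofReal]
    simp only [Complex.ofReal_add, Complex.ofReal_mul, Complex.ofReal_pow]
    linear_combination ((Real.cos r : ℂ) * (Real.sin r : ℂ)) * hwre
  have hZne : ∀ r, Z r ≠ 0 := by
    intro r h0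
    have h0' : (Real.cos r : ℂ) • u + (Real.sin r : ℂ) • y = 0 := h0
    by_cases hs : Real.sin r = 0
    · have hcne : (Real.cos r : ℂ) ≠ 0 := by
        have : Real.cos r ^ 2 = 1 := by
          have := Real.sin_sq_add_cos_sq r; rw [hs] at this; simpa using this
        intro hcc
        rw [show Real.cos r = 0 by exact_mod_cast hcc] at this
        norm_num at this
      have hu0 : u = 0 := by
        have : (Real.cos r : ℂ) • u = 0 := by
          simpa [hs] using h0'
        exact (smul_eq_zero.mp this).resolve_left hcne
      rw [hu0] at hu1
      simp at hu1
    · have hsne : (Real.sin r : ℂ) ≠ 0 := by exact_mod_cast hs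
      have h1 : ((Real.sin r : ℂ)) • y = (-(Real.cos r : ℂ)) • u := by
        rw [neg_smul]
        rw [add_comm] at h0'
        exact (add_eq_zero_iff_eq_neg).mp h0'
      have h2 := congrArg (fun zz => star zz ⬝ᵥ A.mulVec zz) h1
      rw [q_smul, q_smul, hqy, hqu, mul_zero, mul_one, Complex.conj_ofReal] at h2
      exact hsne ((mul_self_eq_zero).mp h2)
  have hNpos : ∀ r, 0 < 1 + Real.cos r * Real.sin r * v.re := by
    intro r
    have hp : (0 : ℂ) < star (Z r) ⬝ᵥ (Z r) :=
      dotProduct_star_self_pos_iff.mpr (hZne r)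
    rw [hZdot r] at hp
    exact_mod_cast (Complex.lt_def.mp hp).1
  set f : ℝ → ℝ := fun r =>
    (Real.sin r ^ 2 + Real.cos r * Real.sin r * w.re) / (1 + Real.cos r * Real.sin r * v.re)
    with hf
  have hfc : Continuous f := by
    apply Continuous.div
    · exact (Real.continuous_sin.pow 2).add
        ((Real.continuous_cos.mul Real.continuous_sin).mul continuous_const)
    · exact continuous_const.add
        ((Real.continuous_cos.mul Real.continuous_sin).mul continuous_const)
    · exact fun r => (hNpos r).ne'
  have hf0 : f 0 = 0 := by rw [hf]; norm_num
  have hfpi : f (Real.pi / 2) = 1 := by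
    rw [hf]
    norm_num [Real.sin_pi_div_two, Real.cos_pi_div_two]
  obtain ⟨r, _, hr⟩ : ∃ r ∈ Set.Icc (0 : ℝ) (Real.pi / 2), f r = t := by
    have := intermediate_value_Icc (by positivity : (0:ℝ) ≤ Real.pi / 2) hfc.continuousOn
      (by rw [hf0, hfpi]; exact Set.mem_Icc.mpr ⟨ht0, ht1⟩)
    obtain ⟨r, hrI, hrt⟩ := this
    exact ⟨r, hrI, hrt⟩
  set N := 1 + Real.cos r * Real.sin r * v.re with hN
  have hN0 : 0 < N := hNpos r
  refine ⟨(((Real.sqrt N)⁻¹ : ℝ) : ℂ) • Z r, ?_, ?_⟩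
  · rw [smul_dot_smul, hZdot r, Complex.conj_ofReal]
    norm_cast
    rw [← mul_inv, Real.mul_self_sqrt hN0.le]
    field_simp
    exact hN.symm
  · rw [q_smul, hQ r, Complex.conj_ofReal]
    have hval : Real.sin r ^ 2 + Real.cos r * Real.sin r * w.re = t * N := by
      have := hr
      rw [hf] at this
      dsimp only at this
      rw [div_eq_iff (hNpos r).ne'] at this
      rw [hN]
      linarith [this]
    rw [hval]
    norm_cast
    rw [← mul_inv, Real.mul_self_sqrt hN0.le]
    field_simp

end TH


section Sep

open Complex

private def Wset (A : Matrix (Fin n) (Fin n) ℂ) : Set ℂ :=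
  {z : ℂ | ∃ x, star x ⬝ᵥ x = 1 ∧ star x ⬝ᵥ A.mulVec x = z}

private lemma convex_Wset (A : Matrix (Fin n) (Fin n) ℂ) : Convex ℝ (Wset A) := by
  rintro p₁ ⟨x, hx, rfl⟩ p₂ ⟨y, hy, rfl⟩ a b ha hb hab
  by_cases hpq : star x ⬝ᵥ A.mulVec x = star y ⬝ᵥ A.mulVec y
  · refine ⟨y, hy, ?_⟩
    rw [hpq, ← add_smul, hab, one_smul]
  · set pa := star x ⬝ᵥ A.mulVec x with hpa
    set pb := star y ⬝ᵥ A.mulVec y with hpb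
    have hab' : pb - pa ≠ 0 := sub_ne_zero.mpr (Ne.symm hpq)
    set B := (pb - pa)⁻¹ • (A - pa • (1 : Matrix (Fin n) (Fin n) ℂ)) with hB
    have key : ∀ z : Fin n → ℂ, star z ⬝ᵥ z = 1 →
        star z ⬝ᵥ B.mulVec z = (pb - pa)⁻¹ * (star z ⬝ᵥ A.mulVec z - pa) := by
      intro z hz
      rw [hB, Matrix.smul_mulVec, dotProduct_smul, Matrix.sub_mulVec,
        dotProduct_sub, Matrix.smul_mulVec, Matrix.one_mulVec,
        dotProduct_smul, hz]
      simp [smul_eq_mul]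
    have hBx : star x ⬝ᵥ B.mulVec x = 0 := by
      rw [key x hx, ← hpa, sub_self, mul_zero]
    have hBy : star y ⬝ᵥ B.mulVec y = 1 := by
      rw [key y hy, ← hpb, inv_mul_cancel₀ hab']
    have hb1 : b ≤ 1 := by linarith
    obtain ⟨z, hz1, hzq⟩ := segment_zero_one B hx hy hBx hBy hb hb1
    refine ⟨z, hz1, ?_⟩
    have hzA := key z hz1
    rw [hzq] at hzA
    have hqz : star z ⬝ᵥ A.mulVec z = pa + (pb - pa) * (b : ℂ) := by
      field_simp at hzA
      linear_combination -hzA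
    rw [hqz]
    have hac : (a : ℂ) = 1 - (b : ℂ) := by
      have : (a : ℝ) = 1 - b := by linarith
      exact_mod_cast this
    simp only [Complex.real_smul]
    rw [hac]
    ring

private lemma dot_self_sum (x : Fin n → ℂ) :
    star x ⬝ᵥ x = ((∑ i, Complex.normSq (x i) : ℝ) : ℂ) := by
  push_cast
  simp only [dotProduct, Pi.star_apply, RCLike.star_def]
  exact Finset.sum_congr rfl fun i _ => by
    rw [mul_comm, Complex.mul_conj]

private lemma isCompact_Wset (A : Matrix (Fin n) (Fin n) ℂ) : IsCompact (Wset A) := by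
  have himg : Wset A = (fun x : Fin n → ℂ => star x ⬝ᵥ A.mulVec x) ''
      {x : Fin n → ℂ | star x ⬝ᵥ x = 1} := by
    ext z
    constructor
    · rintro ⟨x, hx, hq⟩; exact ⟨x, hx, hq⟩
    · rintro ⟨x, hx, hq⟩; exact ⟨x, hx, hq⟩
  rw [himg]
  have hsc : IsCompact {x : Fin n → ℂ | star x ⬝ᵥ x = 1} := by
    apply Metric.isCompact_of_isClosed_isBounded
    · exact isClosed_eq (continuous_star.dotProduct continuous_id) continuous_const
    · apply Bornology.IsBounded.subset (Metric.isBounded_closedBall (x := (0 : Fin n → ℂ)) (r := 1))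
      intro x hx
      rw [Metric.mem_closedBall, dist_zero_right]
      have hsum : (∑ i, Complex.normSq (x i)) = 1 := by
        have := hx.symm.trans (dot_self_sum x)
        exact_mod_cast this.symm
      refine pi_norm_le_iff_of_nonneg zero_le_one |>.mpr fun i => ?_
      have hle : Complex.normSq (x i) ≤ 1 := by
        rw [← hsum]
        exact Finset.single_le_sum (fun j _ => Complex.normSq_nonneg (x j)) (Finset.mem_univ i)
      have : ‖x i‖ ^ 2 ≤ 1 := by rwa [← Complex.sq_norm] at hle
      nlinarith [norm_nonneg (x i)]
  exact hsc.image (continuous_star.dotProduct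
    (Continuous.matrix_mulVec continuous_const continuous_id))

private lemma exists_rotation (A : Matrix (Fin n) (Fin n) ℂ) (hA : IsSectorial A) (hn : 0 < n) :
    ∃ θ : ℝ, ∀ x : Fin n → ℂ, star x ⬝ᵥ x = 1 →
      0 < (Complex.exp ((θ : ℂ) * Complex.I) * (star x ⬝ᵥ A.mulVec x)).re := by
  have h0 : (0 : ℂ) ∉ Wset A := by
    rintro ⟨x, hx, hq⟩
    exact hA x hx hq
  obtain ⟨f, u, hfu, hub⟩ :=
    geometric_hahn_banach_point_closed (convex_Wset A) (isCompact_Wset A).isClosed h0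
  rw [map_zero] at hfu
  set ζ : ℂ := (f 1 : ℝ) - (f Complex.I : ℝ) * Complex.I with hζ
  have hζre : ∀ z : ℂ, (ζ * z).re = f z := by
    intro z
    have hz : z = z.re • (1 : ℂ) + z.im • Complex.I := by
      simp only [Complex.real_smul, smul_eq_mul, mul_one]
      exact (Complex.re_add_im z).symm
    conv_rhs => rw [hz]
    rw [map_add, _root_.map_smul, _root_.map_smul]
    simp only [hζ, smul_eq_mul]
    simp [Complex.mul_re, Complex.sub_re, Complex.sub_im, Complex.mul_im,
      Complex.ofReal_re, Complex.ofReal_im, Complex.I_re, Complex.I_im]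
    ring
  -- a unit vector
  set x₀ : Fin n → ℂ := Pi.single ⟨0, hn⟩ 1 with hx₀
  have hx₀1 : star x₀ ⬝ᵥ x₀ = 1 := by
    rw [hx₀]
    simp [dotProduct, Pi.single_apply, apply_ite]
  have hζne : ζ ≠ 0 := by
    intro hz0
    have := hub _ ⟨x₀, hx₀1, rfl⟩
    rw [← hζre] at this
    rw [hz0, zero_mul] at this
    simp at this
    linarith
  have habs : 0 < ‖ζ‖ := norm_pos_iff.mpr hζne
  refine ⟨ζ.arg, fun x hx => ?_⟩
  have h1 : u < (ζ * (star x ⬝ᵥ A.mulVec x)).re := by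
    rw [hζre]
    exact hub _ ⟨x, hx, rfl⟩
  have h2 : ζ = (‖ζ‖ : ℂ) * Complex.exp ((ζ.arg : ℂ) * Complex.I) :=
    (Complex.norm_mul_exp_arg_mul_I ζ).symm
  have h3 : (ζ * (star x ⬝ᵥ A.mulVec x)).re
      = ‖ζ‖ * (Complex.exp ((ζ.arg : ℂ) * Complex.I) * (star x ⬝ᵥ A.mulVec x)).re := by
    conv_lhs => rw [h2]
    rw [mul_assoc]
    simp [Complex.mul_re]
  rw [h3] at h1
  nlinarith [hfu]

end Sep


section Decomp

open Complex
open scoped MatrixOrder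

private lemma dot_conjTranspose (M : Matrix (Fin n) (Fin n) ℂ) (x : Fin n → ℂ) :
    star x ⬝ᵥ Mᴴ.mulVec x = (starRingEnd ℂ) (star x ⬝ᵥ M.mulVec x) := by
  rw [Matrix.dotProduct_mulVec, ← Matrix.star_mulVec, dot_conj (M.mulVec x) x]

private lemma quad_transfer (M N : Matrix (Fin n) (Fin n) ℂ) (x : Fin n → ℂ) :
    star x ⬝ᵥ (Mᴴ * N * M).mulVec x = star (M.mulVec x) ⬝ᵥ N.mulVec (M.mulVec x) := by
  rw [← Matrix.mulVec_mulVec, ← Matrix.mulVec_mulVec, Matrix.dotProduct_mulVec,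
    Matrix.star_mulVec]

private lemma submatrix_conj_phase (M : Matrix (Fin n) (Fin n) ℂ) (g : Fin n → ℝ)
    (σ : Equiv.Perm (Fin n)) :
    (M.submatrix σ id)ᴴ * phaseDiag (fun i => g (σ i)) * (M.submatrix σ id)
      = Mᴴ * phaseDiag g * M := by
  ext i j
  rw [Matrix.mul_apply, Matrix.mul_apply]
  simp only [phaseDiag, Matrix.mul_diagonal, Matrix.conjTranspose_apply,
    Matrix.submatrix_apply, id]
  exact Equiv.sum_comp σ
    (fun k => star (M k i) * Complex.exp (Complex.I * ((g k : ℝ) : ℂ)) * M k j)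

private lemma exists_canonical (A : Matrix (Fin n) (Fin n) ℂ) (hA : IsSectorial A)
    (hn : 0 < n) : ∃ φ, IsCanonicalPhases A φ := by
  classical
  haveI : Nonempty (Fin n) := ⟨⟨0, hn⟩⟩
  obtain ⟨θ, hθ⟩ := exists_rotation A hA hn
  set B := Complex.exp ((θ : ℂ) * Complex.I) • A with hB
  set H : Matrix (Fin n) (Fin n) ℂ := ((1 : ℂ)/2) • (B + Bᴴ) with hH
  have hHq : ∀ x : Fin n → ℂ, star x ⬝ᵥ H.mulVec x
      = (((star x ⬝ᵥ B.mulVec x).re : ℝ) : ℂ) := by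
    intro x
    rw [hH, Matrix.smul_mulVec, dotProduct_smul, Matrix.add_mulVec,
      dotProduct_add, dot_conjTranspose, Complex.add_conj, smul_eq_mul]
    push_cast
    ring
  have hHpd : H.PosDef := by
    refine Matrix.PosDef.of_dotProduct_mulVec_pos ?_ ?_
    · show Hᴴ = H
      rw [hH, Matrix.conjTranspose_smul, Matrix.conjTranspose_add,
        Matrix.conjTranspose_conjTranspose]
      rw [add_comm Bᴴ B]
      congr 1
      simp
    · intro x hx
      rw [hHq]
      obtain ⟨y, m, hm, hy1, hkey⟩ := exists_normalized x hx
      have hBy : star y ⬝ᵥ B.mulVec y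
          = Complex.exp ((θ : ℂ) * Complex.I) * (star y ⬝ᵥ A.mulVec y) := by
        rw [hB, Matrix.smul_mulVec, dotProduct_smul, smul_eq_mul]
      have hre : 0 < (star x ⬝ᵥ B.mulVec x).re := by
        rw [hkey B, hBy]
        have h1 := hθ y hy1
        have h2 : ((m : ℂ) * (Complex.exp ((θ : ℂ) * Complex.I) * (star y ⬝ᵥ A.mulVec y))).re
            = m * (Complex.exp ((θ : ℂ) * Complex.I) * (star y ⬝ᵥ A.mulVec y)).re := by
          simp [Complex.mul_re]
        rw [h2]
        exact mul_pos hm h1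
      rw [Complex.lt_def]
      constructor
      · simpa using hre
      · simp
  have hHps := hHpd.posSemidef
  set R := CFC.sqrt H with hRdef
  have hRH : Rᴴ = R := (CFC.sqrt_nonneg H).posSemidef.isHermitian
  have hRR : R * R = H := CFC.sqrt_mul_sqrt_self H hHps.nonneg
  have hdetH : 0 < H.det := hHpd.det_pos
  have hdetR : R.det ≠ 0 := by
    intro h0
    have hd : R.det * R.det = H.det := by rw [← Matrix.det_mul, hRR]
    rw [h0, mul_zero] at hd
    exact hdetH.ne' hd.symm
  have hRunit : IsUnit R := (Matrix.isUnit_iff_isUnit_det R).mpr (isUnit_iff_ne_zero.mpr hdetR)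
  have hRinv : R * R⁻¹ = 1 := Matrix.mul_nonsing_inv R (isUnit_iff_ne_zero.mpr hdetR)
  have hRinv' : R⁻¹ * R = 1 := Matrix.nonsing_inv_mul R (isUnit_iff_ne_zero.mpr hdetR)
  set K : Matrix (Fin n) (Fin n) ℂ := (-(Complex.I)/2) • (B - Bᴴ) with hK
  have hKherm : Kᴴ = K := by
    rw [hK, Matrix.conjTranspose_smul, Matrix.conjTranspose_sub,
      Matrix.conjTranspose_conjTranspose]
    rw [show star (-(Complex.I)/2) = Complex.I/2 from by simp]
    rw [show Bᴴ - B = -(B - Bᴴ) from (neg_sub _ _).symm, smul_neg, ← neg_smul]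
    rw [neg_div]
  have hHK : H + Complex.I • K = B := by
    rw [hH, hK, smul_smul]
    rw [show Complex.I * (-(Complex.I)/2) = (1 : ℂ)/2 from by
      linear_combination (-(1:ℂ)/2) * Complex.I_mul_I]
    rw [← smul_add, show (B + Bᴴ) + (B - Bᴴ) = B + B from by abel, ← two_smul ℂ B, smul_smul]
    norm_num
  set S := R⁻¹ * K * R⁻¹ with hSdef
  have hSherm : S.IsHermitian := by
    show Sᴴ = S
    rw [hSdef, Matrix.conjTranspose_mul, Matrix.conjTranspose_mul,
      Matrix.conjTranspose_nonsing_inv, hRH, hKherm]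
    simp only [Matrix.mul_assoc]
  have hRSR : R * S * R = K := by
    rw [hSdef]
    have hassoc : R * (R⁻¹ * K * R⁻¹) * R = (R * R⁻¹) * (K * (R⁻¹ * R)) := by
      simp only [Matrix.mul_assoc]
    rw [hassoc, hRinv, hRinv', Matrix.one_mul, Matrix.mul_one]
  set U : Matrix (Fin n) (Fin n) ℂ := (hSherm.eigenvectorUnitary : Matrix (Fin n) (Fin n) ℂ) with hUdef
  set μ : Fin n → ℝ := hSherm.eigenvalues with hμdef
  have hspec : S = U * Matrix.diagonal (RCLike.ofReal ∘ μ) * star U := hSherm.spectral_theorem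
  have hUstar : U * star U = 1 := Matrix.mem_unitaryGroup_iff.mp (hSherm.eigenvectorUnitary).2
  have hUstar' : star U * U = 1 := Matrix.mem_unitaryGroup_iff'.mp (hSherm.eigenvectorUnitary).2
  have hUunit : IsUnit U := ⟨⟨U, star U, hUstar, hUstar'⟩, rfl⟩
  set ψ : Fin n → ℝ := fun i => Real.arctan (μ i) with hψdef
  set ρ : Fin n → ℝ := fun i => Real.sqrt (Real.sqrt (1 + μ i ^ 2)) with hρdef
  have hρpos : ∀ i, 0 < ρ i := fun i =>
    Real.sqrt_pos.mpr (Real.sqrt_pos.mpr (by positivity))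
  set G : Matrix (Fin n) (Fin n) ℂ := Matrix.diagonal (fun i => (ρ i : ℂ)) with hGdef
  have hGH : Gᴴ = G := by
    rw [hGdef, Matrix.diagonal_conjTranspose]
    refine congrArg Matrix.diagonal (funext fun i => ?_)
    exact Complex.conj_ofReal _
  have hGunit : IsUnit G := by
    rw [Matrix.isUnit_iff_isUnit_det, hGdef, Matrix.det_diagonal]
    refine isUnit_iff_ne_zero.mpr (Finset.prod_ne_zero_iff.mpr fun i _ => ?_)
    exact_mod_cast (hρpos i).ne'
  have hmidd : G * phaseDiag ψ * G
      = Matrix.diagonal fun i => 1 + (μ i : ℂ) * Complex.I := by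
    rw [phaseDiag, hGdef, Matrix.diagonal_mul_diagonal, Matrix.diagonal_mul_diagonal]
    refine congrArg Matrix.diagonal (funext fun i => ?_)
    have h1 : Real.sqrt (1 + μ i ^ 2) ≠ 0 := by positivity
    have hsC : ((Real.sqrt (1 + μ i ^ 2) : ℝ) : ℂ) ≠ 0 := by exact_mod_cast h1
    have hρ2 : (ρ i : ℂ) * (ρ i : ℂ) = ((Real.sqrt (1 + μ i ^ 2) : ℝ) : ℂ) := by
      rw [hρdef, ← Complex.ofReal_mul, Real.mul_self_sqrt (Real.sqrt_nonneg _)]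
    rw [mul_comm Complex.I ((ψ i : ℝ) : ℂ), Complex.exp_mul_I]
    rw [show ψ i = Real.arctan (μ i) from by rw [hψdef]]
    rw [← Complex.ofReal_cos, ← Complex.ofReal_sin, Real.cos_arctan, Real.sin_arctan]
    push_cast
    field_simp
    linear_combination (1 + (μ i : ℂ) * Complex.I) * hρ2
  have hcoe : (RCLike.ofReal : ℝ → ℂ) = Complex.ofReal := rfl
  have hD1 : (Matrix.diagonal fun i => 1 + (μ i : ℂ) * Complex.I)
      = 1 + Complex.I • Matrix.diagonal (RCLike.ofReal ∘ μ) := by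
    rw [show (1 : Matrix (Fin n) (Fin n) ℂ) = Matrix.diagonal (fun _ => 1) from
      (Matrix.diagonal_one).symm, ← Matrix.diagonal_smul, Matrix.diagonal_add]
    refine congrArg Matrix.diagonal (funext fun i => ?_)
    simp only [Pi.add_apply, Pi.smul_apply, Function.comp_apply, hcoe, smul_eq_mul]
    ring
  set T₀ : Matrix (Fin n) (Fin n) ℂ := G * star U * R with hT₀def
  have hT₀H : T₀ᴴ = R * (U * G) := by
    rw [hT₀def, Matrix.conjTranspose_mul, Matrix.conjTranspose_mul, hGH, hRH,
      Matrix.star_eq_conjTranspose, Matrix.conjTranspose_conjTranspose]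
  have hT₀unit : IsUnit T₀ := (hGunit.mul hUunit.star).mul hRunit
  have e1 : R * (1 + Complex.I • S) * R = B := by
    rw [Matrix.mul_add, Matrix.mul_one, Matrix.add_mul, Matrix.mul_smul, Matrix.smul_mul,
      hRR, hRSR]
    exact hHK
  have e2 : U * (Matrix.diagonal fun i => 1 + (μ i : ℂ) * Complex.I) * star U
      = 1 + Complex.I • S := by
    rw [hD1, Matrix.mul_add, Matrix.mul_one, Matrix.add_mul, Matrix.mul_smul, Matrix.smul_mul,
      hUstar, hspec]
  have hBdec : B = T₀ᴴ * phaseDiag ψ * T₀ := by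
    have hseq : T₀ᴴ * phaseDiag ψ * T₀
        = R * (U * (G * phaseDiag ψ * G) * star U) * R := by
      rw [hT₀H, hT₀def]
      simp only [Matrix.mul_assoc]
    rw [hseq, hmidd, e2, e1]
  -- sorting
  set σ : Equiv.Perm (Fin n) := Tuple.sort (fun i => -ψ i) with hσdef
  have hmono := Tuple.monotone_sort (fun i => -ψ i)
  have hant : Antitone (fun i => ψ (σ i)) := by
    intro i j hij
    have := hmono hij
    simpa using this
  set i0 : Fin n := ⟨0, hn⟩ with hi0
  set ilast : Fin n := ⟨n - 1, by omega⟩ with hilast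
  set m0 : ℝ := (ψ (σ i0) + ψ (σ ilast)) / 2 - θ with hm0def
  set k : ℤ := ⌈(m0 - Real.pi) / (2 * Real.pi)⌉ with hkdef
  set φ : Fin n → ℝ := fun i => ψ (σ i) - θ - 2 * Real.pi * k with hφdef
  set T : Matrix (Fin n) (Fin n) ℂ := T₀.submatrix σ id with hTdef
  -- unit
  have hT0inj : Function.Injective T₀.mulVec := Matrix.mulVec_injective_iff_isUnit.mpr hT₀unit
  have hTv : ∀ v : Fin n → ℂ, T.mulVec v = fun i => T₀.mulVec v (σ i) := by
    intro v
    funext i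
    rw [hTdef]
    simp [Matrix.mulVec, dotProduct, Matrix.submatrix_apply]
  have hTinj : Function.Injective T.mulVec := by
    intro v w hvw
    apply hT0inj
    funext j
    have h1 := congrFun hvw (σ.symm j)
    rw [hTv, hTv] at h1
    simpa using h1
  have hTunit : IsUnit T := Matrix.mulVec_injective_iff_isUnit.mp hTinj
  -- phase diag shift
  have hpd : phaseDiag φ
      = Complex.exp (-(θ : ℂ) * Complex.I) • phaseDiag (fun i => ψ (σ i)) := by
    rw [phaseDiag, phaseDiag, ← Matrix.diagonal_smul]
    refine congrArg Matrix.diagonal (funext fun i => ?_)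
    simp only [Pi.smul_apply, smul_eq_mul]
    rw [← Complex.exp_add, Complex.exp_eq_exp_iff_exists_int]
    refine ⟨-k, ?_⟩
    rw [show φ i = ψ (σ i) - θ - 2 * Real.pi * k from by rw [hφdef]]
    push_cast
    ring
  have hperm : Tᴴ * phaseDiag (fun i => ψ (σ i)) * T = T₀ᴴ * phaseDiag ψ * T₀ := by
    rw [hTdef]
    exact submatrix_conj_phase T₀ ψ σ
  have hAB : A = Complex.exp (-(θ : ℂ) * Complex.I) • B := by
    rw [hB, smul_smul, ← Complex.exp_add]
    rw [show -(θ : ℂ) * Complex.I + (θ : ℂ) * Complex.I = 0 from by ring]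
    rw [Complex.exp_zero, one_smul]
  have hAdec : A = Tᴴ * phaseDiag φ * T := by
    rw [hpd, Matrix.mul_smul, Matrix.smul_mul, hperm, ← hBdec]
    exact hAB
  -- order facts
  have hant' : Antitone φ := by
    intro i j hij
    rw [hφdef]
    simp only
    have := hant hij
    linarith
  have hψb1 : ∀ i, ψ i < Real.pi / 2 := by
    intro i
    rw [hψdef]
    exact Real.arctan_lt_pi_div_two _
  have hψb2 : ∀ i, -(Real.pi / 2) < ψ i := by
    intro i
    rw [hψdef]
    exact Real.neg_pi_div_two_lt_arctan _
  have hspread : ∀ i j, φ i - φ j < Real.pi := by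
    intro i j
    rw [hφdef]
    simp only
    have h1 := hψb1 (σ i)
    have h2 := hψb2 (σ j)
    linarith
  have hsup : (⨆ i, φ i) = φ i0 := by
    apply le_antisymm
    · refine ciSup_le fun i => hant' ?_
      rw [hi0, Fin.le_def]
      exact Nat.zero_le _
    · exact le_ciSup (Set.Finite.bddAbove (Set.finite_range φ)) i0
  have hinf : (⨅ i, φ i) = φ ilast := by
    apply le_antisymm
    · exact ciInf_le (Set.Finite.bddBelow (Set.finite_range φ)) ilast
    · refine le_ciInf fun i => hant' ?_
      have hi := i.isLt
      rw [hilast, Fin.le_def]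
      show (i : ℕ) ≤ n - 1
      omega
  have hmidval : (φ i0 + φ ilast) / 2 = m0 - 2 * Real.pi * k := by
    rw [hφdef, hm0def]
    simp only
    ring
  have hπ := Real.pi_pos
  have hc1 : (m0 - Real.pi) / (2 * Real.pi) ≤ (k : ℝ) := Int.le_ceil _
  have hc2 : (k : ℝ) < (m0 - Real.pi) / (2 * Real.pi) + 1 := by
    rw [hkdef]
    exact_mod_cast Int.ceil_lt_add_one _
  have hc1' : m0 - Real.pi ≤ 2 * Real.pi * (k : ℝ) := by
    have := (div_le_iff₀ (by linarith : (0:ℝ) < 2 * Real.pi)).mp hc1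
    linarith
  have hc2' : 2 * Real.pi * ((k : ℝ) - 1) < m0 - Real.pi := by
    have h3 : (k : ℝ) - 1 < (m0 - Real.pi) / (2 * Real.pi) := by linarith
    have := (lt_div_iff₀ (by linarith : (0:ℝ) < 2 * Real.pi)).mp h3
    linarith
  refine ⟨φ, hant', hspread, ?_, ?_, T, hTunit, hAdec⟩
  · rw [hsup, hinf, hmidval]
    push_cast at hc2' ⊢
    linarith
  · rw [hsup, hinf, hmidval]
    push_cast at hc1' ⊢
    linarith

end Decomp


/-- if the numerical range contains no positive real number, then
`A` has full phase-rank. -/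
theorem prank_eq_n_of_no_positive_real_in_range
    (A : Matrix (Fin n) (Fin n) ℂ) (hA : IsSectorial A)
    (h : ∀ x : Fin n → ℂ, star x ⬝ᵥ x = 1 →
      ¬((star x ⬝ᵥ A.mulVec x).im = 0 ∧ 0 < (star x ⬝ᵥ A.mulVec x).re)) :
    prank A = n := by
  classical
  rcases Nat.eq_zero_or_pos n with hn | hn
  · subst hn
    have he : {k : Fin 0 | phases A k ≠ 0} = ∅ := Set.eq_empty_of_isEmpty _
    rw [prank, he, Set.ncard_empty]
  · have hex : ∃ φ, IsCanonicalPhases A φ := exists_canonical A hA hn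
    have hph : IsCanonicalPhases A (phases A) := by
      rw [phases, dif_pos hex]
      exact hex.choose_spec
    obtain ⟨hant, hspread, hmid1, hmid2, T, hTunit, hdec⟩ := hph
    have hdetT : IsUnit T.det := (Matrix.isUnit_iff_isUnit_det T).mp hTunit
    have hall : ∀ k, phases A k ≠ 0 := by
      intro k hk0
      set x : Fin n → ℂ := T⁻¹ *ᵥ Pi.single k 1 with hx
      have hTx : T *ᵥ x = Pi.single k 1 := by
        rw [hx, Matrix.mulVec_mulVec, Matrix.mul_nonsing_inv _ hdetT, Matrix.one_mulVec]
      have hxne : x ≠ 0 := by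
        intro h0
        rw [h0, Matrix.mulVec_zero] at hTx
        have := congrFun hTx k
        simp at this
      have hqx : star x ⬝ᵥ A.mulVec x = 1 := by
        rw [hdec, quad_transfer, hTx]
        have hd : (phaseDiag (phases A)).mulVec (Pi.single k 1)
            = fun i => phaseDiag (phases A) i k := by
          funext i
          rw [Matrix.mulVec_single]
          simp
        rw [hd]
        rw [show (fun i => phaseDiag (phases A) i k) = Pi.single k (Complex.exp
            (Complex.I * ((phases A k : ℝ) : ℂ))) from ?_]
        · rw [dotProduct_single]
          simp [hk0]
        · funext i
          rw [phaseDiag, Matrix.diagonal_apply, Pi.single_apply]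
          by_cases hik : i = k <;> simp [hik]
      obtain ⟨y, m, hm, hy1, hkey⟩ := exists_normalized x hxne
      have hyq : star y ⬝ᵥ A.mulVec y = ((m⁻¹ : ℝ) : ℂ) := by
        have h1 := hkey A
        rw [hqx] at h1
        have hm0 : (m : ℂ) ≠ 0 := by exact_mod_cast hm.ne'
        rw [Complex.ofReal_inv]
        field_simp [hm0]
        linear_combination -h1
      refine h y hy1 ?_
      rw [hyq]
      constructor
      · simp
      · simp only [Complex.ofReal_re]
        exact inv_pos.mpr hm
    have huniv : {k : Fin n | phases A k ≠ 0} = Set.univ := Set.eq_univ_of_forall hall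
    rw [prank, huniv, Set.ncard_univ]
    simp

end LowPrank
end
end

section
/- Let A ∈ ℂ^{n×n} be unitary, let T ∈ ℂ^{n×n} be invertible, and let D = diag(e^{iφ₁},…,e^{iφₙ}) be a diagonal unitary matrix with φ₁ ≥ ⋯ ≥ φₙ and φ₁ − φₙ < π, such that A = TᴴDT. Then T is unitary. -/
noncomputable section

open Matrix
open scoped Classical ComplexOrder

namespace LowPrank

variable {n : ℕ}

lemma dotProduct_phaseDiag_ne_zero (ψ : Fin n → ℝ) (c : ℝ)
    (hc : ∀ k, |ψ k - c| < Real.pi / 2) (v : Fin n → ℂ) (hv : v ≠ 0) :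
    star v ⬝ᵥ (phaseDiag ψ) *ᵥ v ≠ 0 := by
  set S := star v ⬝ᵥ (phaseDiag ψ) *ᵥ v with hS
  have hre : (Complex.exp (-(Complex.I * c)) * S).re
      = ∑ k, Complex.normSq (v k) * Real.cos (ψ k - c) := by
    rw [hS]
    simp only [dotProduct, phaseDiag, mulVec_diagonal, Pi.star_apply, RCLike.star_def]
    rw [Finset.mul_sum, Complex.re_sum]
    refine Finset.sum_congr rfl fun k _ => ?_
    have h1 : Complex.exp (-(Complex.I * c)) *
        ((starRingEnd ℂ) (v k) * (Complex.exp (Complex.I * (ψ k : ℂ)) * v k))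
        = (Complex.normSq (v k) : ℂ) * Complex.exp (((ψ k - c : ℝ) : ℂ) * Complex.I) := by
      have h2 : ((starRingEnd ℂ) (v k)) * v k = (Complex.normSq (v k) : ℂ) := by
        rw [mul_comm, Complex.mul_conj]
      calc Complex.exp (-(Complex.I * c)) *
          ((starRingEnd ℂ) (v k) * (Complex.exp (Complex.I * (ψ k : ℂ)) * v k))
          = ((starRingEnd ℂ) (v k) * v k) *
            (Complex.exp (-(Complex.I * c)) * Complex.exp (Complex.I * (ψ k : ℂ))) := by ring
        _ = (Complex.normSq (v k) : ℂ) * Complex.exp (-(Complex.I * c) + Complex.I * (ψ k : ℂ)) := by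
            rw [h2, Complex.exp_add]
        _ = (Complex.normSq (v k) : ℂ) * Complex.exp (((ψ k - c : ℝ) : ℂ) * Complex.I) := by
            push_cast; ring_nf
    rw [h1, Complex.re_ofReal_mul, Complex.exp_ofReal_mul_I_re]
  have hpos : 0 < ∑ k, Complex.normSq (v k) * Real.cos (ψ k - c) := by
    obtain ⟨k₀, hk₀⟩ := Function.ne_iff.mp hv
    have hcos : ∀ k, 0 < Real.cos (ψ k - c) := fun k => by
      have := hc k
      rw [abs_lt] at this
      exact Real.cos_pos_of_mem_Ioo ⟨by linarith [this.1], by linarith [this.2]⟩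
    refine Finset.sum_pos' (fun k _ => mul_nonneg (Complex.normSq_nonneg _) (hcos k).le)
      ⟨k₀, Finset.mem_univ _, mul_pos ?_ (hcos k₀)⟩
    exact Complex.normSq_pos.mpr hk₀
  intro h0
  rw [h0, mul_zero, Complex.zero_re] at hre
  linarith [hre ▸ hpos]

lemma phaseDiag_conjTranspose (ψ : Fin n → ℝ) :
    (phaseDiag ψ)ᴴ = phaseDiag (fun k => -ψ k) := by
  rw [phaseDiag, phaseDiag, diagonal_conjTranspose]
  have h : (star fun k => Complex.exp (Complex.I * (ψ k : ℂ)))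
      = fun k : Fin n => Complex.exp (Complex.I * ((-ψ k : ℝ) : ℂ)) := by
    funext k
    rw [Pi.star_apply, RCLike.star_def, ← Complex.exp_conj]
    congr 1
    rw [_root_.map_mul, Complex.conj_I, Complex.conj_ofReal]
    push_cast
    ring
  rw [h]

lemma phaseDiag_mul_neg (ψ : Fin n → ℝ) :
    phaseDiag ψ * phaseDiag (fun k => -ψ k) = 1 := by
  rw [phaseDiag, phaseDiag, diagonal_mul_diagonal]
  have h : (fun k => Complex.exp (Complex.I * (ψ k : ℂ)) *
      Complex.exp (Complex.I * ((-ψ k : ℝ) : ℂ))) = fun _ : Fin n => (1 : ℂ) := by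
    funext k
    rw [← Complex.exp_add, ← Complex.exp_zero]
    congr 1
    push_cast
    ring
  rw [h]
  exact Matrix.diagonal_one


/-- in a sectorial decomposition of a unitary matrix, `T` is unitary. -/
theorem unitary_sectorial_decomp_factor_unitary
    (A T : Matrix (Fin n) (Fin n) ℂ) (φ : Fin n → ℝ)
    (hA : A ∈ Matrix.unitaryGroup (Fin n) ℂ)
    (hT : IsUnit T) (hφsort : Antitone φ)
    (hspread : ∀ i j, φ i - φ j < Real.pi)
    (hdec : A = Tᴴ * phaseDiag φ * T) :
    T ∈ Matrix.unitaryGroup (Fin n) ℂ := by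
  classical
  set D := phaseDiag φ with hD
  set Ds := phaseDiag (fun k => -φ k) with hDs
  have hDDs : D * Ds = 1 := phaseDiag_mul_neg φ
  have hDH : Dᴴ = Ds := phaseDiag_conjTranspose φ
  have hdet : IsUnit T.det := (Matrix.isUnit_iff_isUnit_det T).mp hT
  have hTi : T * T⁻¹ = 1 := mul_nonsing_inv T hdet
  have hTi' : T⁻¹ * T = 1 := nonsing_inv_mul T hdet
  have hE : Tᴴ * Ds * T * (Tᴴ * D * T) = 1 := by
    have h := Matrix.mem_unitaryGroup_iff'.mp hA
    rw [hdec] at h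
    simpa [Matrix.star_eq_conjTranspose, conjTranspose_mul, conjTranspose_conjTranspose,
      hDH, mul_assoc] using h
  set P := T * Tᴴ with hPdef
  have key : P * Ds * P = Ds := by
    have h1 : T * (Tᴴ * Ds * T * (Tᴴ * D * T)) * T⁻¹ = 1 := by
      rw [hE, mul_one, hTi]
    have h2 : P * Ds * P * D = 1 := by
      calc P * Ds * P * D = T * (Tᴴ * Ds * T * (Tᴴ * D * T)) * T⁻¹ := by
            rw [hPdef]
            simp only [mul_assoc]
            rw [hTi, mul_one]
        _ = 1 := h1
    calc P * Ds * P = P * Ds * P * (D * Ds) := by rw [hDDs, mul_one]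
      _ = (P * Ds * P * D) * Ds := by simp only [mul_assoc]
      _ = Ds := by rw [h2, one_mul]
  have hTH : IsUnit Tᴴ := by
    have := hT.star
    rwa [Matrix.star_eq_conjTranspose] at this
  have hPpos : P.PosDef := by
    refine Matrix.PosDef.of_dotProduct_mulVec_pos ?_ ?_
    · rw [hPdef, IsHermitian, conjTranspose_mul, conjTranspose_conjTranspose]
    · intro x hx
      have hy : Tᴴ *ᵥ x ≠ 0 := by
        intro h
        exact hx ((Matrix.mulVec_injective_iff_isUnit.mpr hTH) (by rw [h, mulVec_zero]))
      have heq : star x ⬝ᵥ P *ᵥ x = star (Tᴴ *ᵥ x) ⬝ᵥ (Tᴴ *ᵥ x) := by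
        rw [hPdef, ← mulVec_mulVec, dotProduct_mulVec, star_mulVec, conjTranspose_conjTranspose]
      rw [heq]
      exact dotProduct_star_self_pos_iff.mpr hy
  have hP : P.IsHermitian := hPpos.1
  have heig : ∀ i, hP.eigenvalues i = 1 := by
    intro i
    have hμpos : 0 < hP.eigenvalues i := hPpos.eigenvalues_pos i
    obtain ⟨v, hv0, hPv⟩ : ∃ v : Fin n → ℂ, v ≠ 0 ∧ P *ᵥ v = ((hP.eigenvalues i : ℝ) : ℂ) • v := by
      refine ⟨⇑(hP.eigenvectorBasis i), ?_, ?_⟩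
      · intro h
        exact hP.eigenvectorBasis.orthonormal.ne_zero i (by ext k; exact congrFun h k)
      · rw [hP.mulVec_eigenvectorBasis i]
        ext k
        simp [Complex.real_smul]
    set μ : ℝ := hP.eigenvalues i with hμdef
    have hkey : ∀ w, star v ⬝ᵥ P *ᵥ w = (μ : ℂ) * (star v ⬝ᵥ w) := by
      intro w
      have h1 : star v ᵥ* P = star (P *ᵥ v) := by
        rw [star_mulVec, hP.eq]
      have h2 : star ((μ : ℂ) • v) = (μ : ℂ) • star v := by
        ext k
        simp [Complex.conj_ofReal]
      rw [dotProduct_mulVec, h1, hPv, h2, smul_dotProduct, smul_eq_mul]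
    have hSne : star v ⬝ᵥ Ds *ᵥ v ≠ 0 := by
      have hn : 0 < n := i.pos
      refine dotProduct_phaseDiag_ne_zero _ (-((φ ⟨0, hn⟩ + φ ⟨n - 1, by omega⟩) / 2))
        (fun k => ?_) v hv0
      have hka : φ k ≤ φ ⟨0, hn⟩ :=
        hφsort (show (⟨0, hn⟩ : Fin n) ≤ k by rw [Fin.le_def]; exact Nat.zero_le _)
      have hkb : φ ⟨n - 1, by omega⟩ ≤ φ k :=
        hφsort (show k ≤ (⟨n - 1, by omega⟩ : Fin n) by
          rw [Fin.le_def]; exact Nat.le_sub_one_of_lt k.isLt)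
      have h1 : φ ⟨0, hn⟩ - φ ⟨n - 1, by omega⟩ < Real.pi := hspread _ _
      rw [abs_lt]
      constructor <;> linarith
    have hS : star v ⬝ᵥ Ds *ᵥ v = (μ : ℂ) * ((μ : ℂ) * (star v ⬝ᵥ Ds *ᵥ v)) := by
      have e1 : (P * Ds * P) *ᵥ v = P *ᵥ (Ds *ᵥ (P *ᵥ v)) := by
        rw [← mulVec_mulVec, ← mulVec_mulVec]
      conv_lhs => rw [← key]
      rw [e1, hPv, mulVec_smul, hkey, dotProduct_smul, smul_eq_mul]
    have hμ2 : (μ : ℂ) * (μ : ℂ) = 1 := by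
      have h0 : ((μ : ℂ) * (μ : ℂ) - 1) * (star v ⬝ᵥ Ds *ᵥ v) = 0 := by
        rw [sub_mul, one_mul, mul_assoc, ← hS, sub_self]
      rcases mul_eq_zero.mp h0 with h | h
      · exact sub_eq_zero.mp h
      · exact absurd h hSne
    have hμr : μ * μ = 1 := by exact_mod_cast hμ2
    nlinarith [hμr, hμpos]
  have hP1 : P = 1 := by
    have hsp := hP.spectral_theorem
    have hdiag : diagonal (RCLike.ofReal ∘ hP.eigenvalues) = (1 : Matrix (Fin n) (Fin n) ℂ) := by
      ext a b
      by_cases hab : a = b <;> simp [diagonal_apply, hab, heig, Matrix.one_apply]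
    rw [hsp, hdiag, map_one]
  rw [Matrix.mem_unitaryGroup_iff, Matrix.star_eq_conjTranspose]
  exact hP1


end LowPrank
end
end
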